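/- arXiv:math/0406094 — 4 statements merged into one kernel-verified Lean document; each statement's English description precedes it below -/
import Mathlib

section
/- Consider the circular parking model with n places and n−1 cars, extended by n−1 independent fair coin flips ε_1,…,ε_{n−1} ∈ {0,1} independent of the parking (so the sample space is {0,…,n−1}^{n−1} × {0,1}^{n−1} with uniform probability). Let A_{k,n} = ε_k L_{k,n} + (1−ε_k) R_{k,n} (the Quick-Find cost of the k-th union), C^{QF}_n = Σ_{k=1}^{n−1} A_{k,n}, and F_n = Σ_{k=1}^{n−1} (L_{k,n}+R_{k,n})/2. Then ‖F_n − C^{QF}_n‖₂ = o(n^{3/2}), i.e. lim_{n→∞} E[(F_n − C^{QF}_n)²]/n³ = 0. -/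
open scoped BigOperators
open Classical Filter Topology

noncomputable section

namespace Parking

/-- The first empty place reached going clockwise from `t` (including `t` itself),
given the set `S` of occupied places. -/
def firstFree {n : ℕ} (S : Finset (ZMod n)) (t : ZMod n) : ZMod n :=
  if h : ∃ i : ℕ, t + (i : ZMod n) ∉ S then t + ((Nat.find h : ℕ) : ZMod n) else t

/-- `occ t j` : the set of places occupied after the first `j` cars (with first tries
`t 0, …, t (j-1)`) have parked. -/
def occ {n : ℕ} (t : ℕ → ZMod n) : ℕ → Finset (ZMod n)
  | 0 => ∅
  | j + 1 => insert (firstFree (occ t j) (t j)) (occ t j)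

/-- The place filled by car `j+1` (0-indexed `j`). -/
def spot {n : ℕ} (t : ℕ → ZMod n) (j : ℕ) : ZMod n :=
  firstFree (occ t j) (t j)

/-- The size of the block whose empty place is `e`, in the configuration with occupied
set `S`: the empty place `e` together with the maximal run of occupied places
immediately preceding it clockwise. -/
def blockSize {n : ℕ} (S : Finset (ZMod n)) (e : ZMod n) : ℕ :=
  if h : ∃ i : ℕ, e - ((i + 1 : ℕ) : ZMod n) ∉ S then Nat.find h + 1 else 0

/-- The next empty place strictly after `e` clockwise, for occupied set `S`. -/
def nextEmpty {n : ℕ} (S : Finset (ZMod n)) (e : ZMod n) : ZMod n :=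
  if h : ∃ i : ℕ, e + ((i + 1 : ℕ) : ZMod n) ∉ S then e + ((Nat.find h + 1 : ℕ) : ZMod n) else e

/-- `L_{j,n}` (1-indexed `j`): the size, just before car `j` parks, of the block whose
empty place is the place `v_j` filled by car `j`. -/
def Lsize {n : ℕ} (t : ℕ → ZMod n) (j : ℕ) : ℕ :=
  blockSize (occ t (j - 1)) (spot t (j - 1))

/-- `R_{j,n}` (1-indexed `j`): the size, just before car `j` parks, of the block
immediately following (clockwise) the block whose empty place is `v_j`. -/
def Rsize {n : ℕ} (t : ℕ → ZMod n) (j : ℕ) : ℕ :=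
  blockSize (occ t (j - 1)) (nextEmpty (occ t (j - 1)) (spot t (j - 1)))

/-- `D_{j,n}` (1-indexed `j`): the displacement of car `j`, i.e. `((v_j - t_j) mod n) + 1`. -/
def Dsize {n : ℕ} (t : ℕ → ZMod n) (j : ℕ) : ℕ :=
  (spot t (j - 1) - t (j - 1)).val + 1

/-- Extend a finite try-sequence `t : Fin k → Fin n` into a function `ℕ → ZMod n`. -/
def extend (n k : ℕ) (t : Fin k → Fin n) : ℕ → ZMod n :=
  fun j => if h : j < k then ((t ⟨j, h⟩ : ℕ) : ZMod n) else 0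

/-- Expectation, under the uniform measure on try-sequences `{0,…,n-1}^k`,
of a real functional of the parking process with `n` places and `k` cars. -/
def expect (n k : ℕ) (X : (ℕ → ZMod n) → ℝ) : ℝ :=
  (∑ t : Fin k → Fin n, X (extend n k t)) / (n : ℝ) ^ k

/-- Probability, under the uniform measure on try-sequences `{0,…,n-1}^k`, of an event. -/
def prob (n k : ℕ) (P : (ℕ → ZMod n) → Prop) : ℝ :=
  expect n k (fun t => if P t then 1 else 0)

/-- The solution of the additive Smoluchowski equation with monodisperse initial data. -/
def q (k : ℕ) (t : ℝ) : ℝ :=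
  ((k : ℝ) * (1 - Real.exp (-t))) ^ (k - 1) * Real.exp (-t) *
    Real.exp (-((k : ℝ) * (1 - Real.exp (-t)))) / (Nat.factorial k)

/-- `emptyPlace S e i`: the `i`-th empty place clockwise starting from `e` (which is
assumed empty), for occupied set `S`. -/
def emptyPlace {n : ℕ} (S : Finset (ZMod n)) (e : ZMod n) : ℕ → ZMod n
  | 0 => e
  | i + 1 => nextEmpty S (emptyPlace S e i)



/-! ### Auxiliary lemmas -/

variable {n : ℕ}

lemma card_occ_le (t : ℕ → ZMod n) (j : ℕ) : (occ t j).card ≤ j := by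
  induction j with
  | zero => simp [occ]
  | succ j ih =>
    calc (occ t (j+1)).card ≤ (occ t j).card + 1 := Finset.card_insert_le _ _
    _ ≤ j + 1 := by omega

lemma occ_mono (t : ℕ → ZMod n) {i j : ℕ} (h : i ≤ j) : occ t i ⊆ occ t j := by
  induction j with
  | zero => simp_all
  | succ j ih =>
    rcases Nat.lt_or_ge i (j+1) with h' | h'
    · exact (ih (by omega)).trans (Finset.subset_insert _ _)
    · have : i = j + 1 := by omega
      subst this; rfl

lemma exists_not_mem_of_card_lt [NeZero n] {S : Finset (ZMod n)} (hS : S.card < n) :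
    ∃ x : ZMod n, x ∉ S := by
  by_contra h
  push_neg at h
  have : (Finset.univ : Finset (ZMod n)) ⊆ S := fun x _ => h x
  have := Finset.card_le_card this
  rw [Finset.card_univ, ZMod.card] at this
  omega

lemma firstFree_spec [NeZero n] {S : Finset (ZMod n)} (hS : S.card < n) (t0 : ZMod n) :
    ∃ i : ℕ, i < n ∧ firstFree S t0 = t0 + (i : ZMod n) ∧ t0 + (i : ZMod n) ∉ S ∧
      ∀ i' < i, t0 + (i' : ZMod n) ∈ S := by
  obtain ⟨x, hx⟩ := exists_not_mem_of_card_lt hS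
  have hwit : t0 + (((x - t0).val : ℕ) : ZMod n) ∉ S := by
    rw [ZMod.natCast_rightInverse (x - t0)]
    simpa using hx
  have h : ∃ i : ℕ, t0 + (i : ZMod n) ∉ S := ⟨_, hwit⟩
  refine ⟨Nat.find h, ?_, ?_, Nat.find_spec h, fun i' hi' => ?_⟩
  · exact lt_of_le_of_lt (Nat.find_min' h hwit) (ZMod.val_lt _)
  · rw [firstFree, dif_pos h]
  · have := Nat.find_min h hi'
    simpa using this

lemma spot_spec [NeZero n] (t : ℕ → ZMod n) {j : ℕ} (hj : j < n) :
    ∃ i : ℕ, i < n ∧ spot t j = t j + (i : ZMod n) ∧ spot t j ∉ occ t j ∧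
      ∀ i' < i, t j + (i' : ZMod n) ∈ occ t j := by
  have hS : (occ t j).card < n := lt_of_le_of_lt (card_occ_le t j) hj
  obtain ⟨i, h1, h2, h3, h4⟩ := firstFree_spec hS (t j)
  exact ⟨i, h1, h2, by rw [spot, h2]; exact h3, h4⟩

lemma occ_eq_image (t : ℕ → ZMod n) (j : ℕ) :
    occ t j = (Finset.range j).image (spot t) := by
  induction j with
  | zero => simp [occ]
  | succ j ih =>
    rw [Finset.range_add_one, Finset.image_insert, ← ih]
    rfl

lemma exists_block_witness [NeZero n] {S : Finset (ZMod n)} (hS : S.card < n) (e : ZMod n) :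
    ∃ i : ℕ, i < n ∧ e - ((i + 1 : ℕ) : ZMod n) ∉ S := by
  obtain ⟨x, hx⟩ := exists_not_mem_of_card_lt hS
  have hn1 : 1 ≤ n := Nat.one_le_iff_ne_zero.mpr (NeZero.ne n)
  rcases eq_or_ne x e with rfl | hne
  · refine ⟨n - 1, by omega, ?_⟩
    have : ((n - 1 + 1 : ℕ) : ZMod n) = 0 := by
      rw [Nat.sub_add_cancel hn1]; exact ZMod.natCast_self n
    rw [this]; simpa using hx
  · have hval : 0 < (e - x).val := by
      have : e - x ≠ 0 := sub_ne_zero.mpr (Ne.symm hne)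
      exact ZMod.val_pos.mpr this
    refine ⟨(e - x).val - 1, by have := ZMod.val_lt (e - x); omega, ?_⟩
    have : ((e - x).val - 1 + 1 : ℕ) = (e - x).val := by omega
    rw [this, ZMod.natCast_rightInverse (e - x)]
    simpa using hx

lemma blockSize_le [NeZero n] {S : Finset (ZMod n)} (hS : S.card < n) (e : ZMod n) :
    blockSize S e ≤ n := by
  obtain ⟨i, hi, hw⟩ := exists_block_witness hS e
  have h : ∃ i : ℕ, e - ((i + 1 : ℕ) : ZMod n) ∉ S := ⟨i, hw⟩
  rw [blockSize, dif_pos h]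
  have := Nat.find_min' h hw
  omega

lemma arc_of_blockSize {S : Finset (ZMod n)} {e : ZMod n} {T : ℕ}
    (h : T + 1 ≤ blockSize S e) : ∀ r < T, e - (T : ZMod n) + (r : ZMod n) ∈ S := by
  intro r hr
  rw [blockSize] at h
  split at h
  · rename_i hex
    have hfind : T ≤ Nat.find hex := by omega
    have hmem : ¬ (e - ((T - r - 1 + 1 : ℕ) : ZMod n) ∉ S) :=
      Nat.find_min hex (lt_of_lt_of_le (by omega) hfind)
    rw [not_not] at hmem
    have harith : ((T - r - 1 + 1 : ℕ) : ZMod n) = (T : ZMod n) - (r : ZMod n) := by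
      have : (T - r - 1 + 1 : ℕ) = T - r := by omega
      rw [this, Nat.cast_sub (le_of_lt hr)]
    rw [harith] at hmem
    convert hmem using 1
    ring
  · omega

lemma blockSize_empty_occ [NeZero n] (e : ZMod n) : blockSize (∅ : Finset (ZMod n)) e = 1 := by
  have h : ∃ i : ℕ, e - ((i + 1 : ℕ) : ZMod n) ∉ (∅ : Finset (ZMod n)) := ⟨0, by simp⟩
  rw [blockSize, dif_pos h]
  simp [Nat.find_eq_zero h]

/-- The window of `w` consecutive places starting at `a`. -/
def win (a : ZMod n) (w : ℕ) : Finset (ZMod n) :=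
  (Finset.range w).image (fun r : ℕ => a + (r : ZMod n))

lemma mem_win_iff {a y : ZMod n} {w : ℕ} :
    y ∈ win a w ↔ ∃ r, r < w ∧ y = a + (r : ZMod n) := by
  simp only [win, Finset.mem_image, Finset.mem_range]
  constructor
  · rintro ⟨r, hr, rfl⟩; exact ⟨r, hr, rfl⟩
  · rintro ⟨r, hr, rfl⟩; exact ⟨r, hr, rfl⟩

lemma mem_win [NeZero n] {a y : ZMod n} {w : ℕ} (hw : w ≤ n) :
    y ∈ win a w ↔ (y - a).val < w := by
  rw [mem_win_iff]
  constructor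
  · rintro ⟨r, hr, rfl⟩
    have : (a + (r : ZMod n) - a) = (r : ZMod n) := by ring
    rw [this, ZMod.val_cast_of_lt (lt_of_lt_of_le hr hw)]
    exact hr
  · intro hy
    refine ⟨(y - a).val, hy, ?_⟩
    rw [ZMod.natCast_rightInverse (y - a)]
    ring

lemma card_win [NeZero n] {a : ZMod n} {w : ℕ} (hw : w ≤ n) : (win a w).card = w := by
  rw [win, Finset.card_image_of_injOn, Finset.card_range]
  intro r hr r' hr' h
  simp only [Finset.coe_range, Set.mem_Iio] at hr hr'
  have hc : (r : ZMod n) = (r' : ZMod n) := add_left_cancel h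
  have h1 := ZMod.val_cast_of_lt (lt_of_lt_of_le hr hw)
  have h2 := ZMod.val_cast_of_lt (lt_of_lt_of_le hr' hw)
  rw [hc] at h1
  omega

/-- The key combinatorial lemma: a fully occupied arc of length `T` forces an
overloaded window. -/
lemma window_overload [NeZero n] {t : ℕ → ZMod n} {j T : ℕ} (hj2 : j + 2 ≤ n) (hT : 1 ≤ T)
    {v : ZMod n} (harc : ∀ r < T, v + (r : ZMod n) ∈ occ t j) :
    ∃ a : ZMod n, ∃ w : ℕ, T ≤ w ∧ w ≤ j ∧
      w ≤ ((Finset.range j).filter (fun k => t k ∈ win a w)).card := by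
  have hcard : (occ t j).card ≤ j := card_occ_le t j
  have hlt : (occ t j).card < n := by omega
  have hvmem : v ∈ occ t j := by simpa using harc 0 hT
  have hex : ∃ i : ℕ, v - ((i + 1 : ℕ) : ZMod n) ∉ occ t j :=
    (exists_block_witness hlt v).imp (fun i h => h.2)
  set b := Nat.find hex with hbdef
  have hb1 : v - ((b + 1 : ℕ) : ZMod n) ∉ occ t j := Nat.find_spec hex
  have hb2 : ∀ i < b, v - ((i + 1 : ℕ) : ZMod n) ∈ occ t j := by
    intro i hi
    have := Nat.find_min hex hi
    simpa using this
  set a : ZMod n := v - (b : ZMod n) with hadef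
  set w : ℕ := b + T with hwdef
  have hWsub : win a w ⊆ occ t j := by
    intro y hy
    obtain ⟨r, hr, rfl⟩ := mem_win_iff.mp hy
    rcases Nat.lt_or_ge r b with h' | h'
    · have harith : a + (r : ZMod n) = v - ((b - r - 1 + 1 : ℕ) : ZMod n) := by
        have h1 : (b - r - 1 + 1 : ℕ) = b - r := by omega
        rw [h1, Nat.cast_sub (le_of_lt h'), hadef]
        ring
      rw [harith]
      exact hb2 (b - r - 1) (by omega)
    · have harith : a + (r : ZMod n) = v + ((r - b : ℕ) : ZMod n) := by
        rw [Nat.cast_sub h', hadef]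
        ring
      rw [harith]
      exact harc (r - b) (by omega)
  have hwn : w ≤ n := by
    by_contra hw
    push_neg at hw
    have huniv : (Finset.univ : Finset (ZMod n)) ⊆ win a w := by
      intro y _
      refine mem_win_iff.mpr ⟨(y - a).val, lt_of_lt_of_le (ZMod.val_lt _) (le_of_lt hw), ?_⟩
      rw [ZMod.natCast_rightInverse (y - a)]
      ring
    have := Finset.card_le_card (huniv.trans hWsub)
    rw [Finset.card_univ, ZMod.card] at this
    omega
  have hcardW : (win a w).card = w := card_win hwn
  have hwj : w ≤ j := by
    have := Finset.card_le_card hWsub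
    omega
  refine ⟨a, w, by omega, hwj, ?_⟩
  -- every place of the window is the spot of some car that tried inside the window
  have hspots : (win a w).card ≤
      ((Finset.range j).filter (fun k => spot t k ∈ win a w)).card := by
    apply Finset.card_le_card_of_surjOn (spot t)
    intro y hy
    have hy2 : y ∈ occ t j := hWsub hy
    rw [occ_eq_image] at hy2
    obtain ⟨k, hk, hky⟩ := Finset.mem_image.mp hy2
    refine ⟨k, ?_, hky⟩
    simp only [Finset.coe_filter, Set.mem_setOf_eq]
    exact ⟨hk, by rw [hky]; exact hy⟩
  have hsub : ((Finset.range j).filter (fun k => spot t k ∈ win a w)) ⊆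
      ((Finset.range j).filter (fun k => t k ∈ win a w)) := by
    intro k hk
    rw [Finset.mem_filter] at hk ⊢
    obtain ⟨hkr, hkspot⟩ := hk
    refine ⟨hkr, ?_⟩
    rw [Finset.mem_range] at hkr
    by_contra hts
    obtain ⟨i, hin, hspoteq, _, hpath⟩ := spot_spec t (show k < n by omega)
    set u : ℕ := (t k - a).val with hudef
    have hu : w ≤ u := by
      have := (mem_win (a := a) (y := t k) hwn).not.mp hts
      omega
    have hun : u < n := ZMod.val_lt _
    set r₀ : ℕ := (spot t k - a).val with hr0def
    have hr0 : r₀ < w := (mem_win hwn).mp hkspot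
    have hieq : i = r₀ + (n - u) := by
      have h1 : spot t k - t k = (i : ZMod n) := by rw [hspoteq]; ring
      have h2 : spot t k - t k = ((r₀ + (n - u) : ℕ) : ZMod n) := by
        push_cast [Nat.cast_sub (le_of_lt hun)]
        rw [ZMod.natCast_self]
        have e1 : ((r₀ : ℕ) : ZMod n) = spot t k - a := ZMod.natCast_rightInverse _
        have e2 : ((u : ℕ) : ZMod n) = t k - a := ZMod.natCast_rightInverse _
        rw [e1, e2]
        ring
      have h3 : ((i : ℕ) : ZMod n) = ((r₀ + (n - u) : ℕ) : ZMod n) := by rw [← h1, h2]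
      have h4 : (((i : ℕ) : ZMod n)).val = i := ZMod.val_cast_of_lt hin
      have h5 : (((r₀ + (n - u) : ℕ) : ZMod n)).val = r₀ + (n - u) :=
        ZMod.val_cast_of_lt (by omega)
      rw [h3, h5] at h4
      omega
    have hprev : t k + ((n - u - 1 : ℕ) : ZMod n) = a - 1 := by
      have e2 : ((u : ℕ) : ZMod n) = t k - a := ZMod.natCast_rightInverse _
      have e3 : (n - u - 1 : ℕ) = n - (u + 1) := by omega
      rw [e3, Nat.cast_sub (show u + 1 ≤ n by omega), ZMod.natCast_self]
      push_cast
      rw [e2]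
      ring
    have hmem : a - 1 ∈ occ t k := by
      rw [← hprev]
      exact hpath _ (by omega)
    have hmem2 : a - 1 ∈ occ t j := occ_mono t (le_of_lt hkr) hmem
    have heq : a - 1 = v - ((b + 1 : ℕ) : ZMod n) := by
      rw [hadef]; push_cast; ring
    rw [heq] at hmem2
    exact hb1 hmem2
  calc w = (win a w).card := hcardW.symm
  _ ≤ _ := hspots
  _ ≤ _ := Finset.card_le_card hsub

lemma card_cast_mem [NeZero n] (W : Finset (ZMod n)) :
    (Finset.univ.filter (fun v : Fin n => (((v : ℕ)) : ZMod n) ∈ W)).card = W.card := by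
  refine Finset.card_nbij' (fun v => (((v : ℕ)) : ZMod n))
    (fun x => (⟨x.val, ZMod.val_lt x⟩ : Fin n)) ?_ ?_ ?_ ?_
  · intro v hv
    exact (Finset.mem_filter.mp hv).2
  · intro x hx
    simp only [Finset.coe_filter, Finset.mem_filter, Finset.mem_univ, true_and, Set.mem_setOf_eq]
    rw [ZMod.natCast_rightInverse x]
    exact hx
  · intro v _
    apply Fin.ext
    simp [ZMod.val_cast_of_lt v.isLt]
  · intro x _
    exact ZMod.natCast_rightInverse x

lemma card_fin_lt {K j : ℕ} (hjK : j ≤ K) :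
    (Finset.univ.filter (fun k : Fin K => (k : ℕ) < j)).card = j := by
  have h : Finset.univ.filter (fun k : Fin K => (k : ℕ) < j)
      = Finset.map (Fin.castLEEmb hjK) Finset.univ := by
    ext k
    simp only [Finset.mem_filter, Finset.mem_univ, true_and, Finset.mem_map]
    constructor
    · intro hk
      exact ⟨⟨k, hk⟩, rfl⟩
    · rintro ⟨x, -, rfl⟩
      simpa using x.isLt
  rw [h, Finset.card_map, Finset.card_univ, Fintype.card_fin]

lemma hits_eq {K j : ℕ} (hjK : j ≤ K) (tt : Fin K → Fin n) (W : Finset (ZMod n)) :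
    ((Finset.range j).filter (fun k => extend n K tt k ∈ W)).card
      = (Finset.univ.filter (fun k : Fin K => (k : ℕ) < j ∧ (((tt k : ℕ)) : ZMod n) ∈ W)).card := by
  rcases Nat.eq_zero_or_pos K with rfl | hK0
  · have : j = 0 := by omega
    subst this
    simp
  refine Finset.card_nbij' (fun k => (⟨k % K, Nat.mod_lt _ hK0⟩ : Fin K))
    (fun k => (k : ℕ)) ?_ ?_ ?_ ?_
  · intro k hk
    obtain ⟨hk1, hk2⟩ := Finset.mem_filter.mp hk
    have hkj := Finset.mem_range.mp hk1
    have hkK : k < K := by omega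
    simp only [Finset.coe_filter, Finset.mem_filter, Finset.mem_univ, true_and, Set.mem_setOf_eq]
    constructor
    · simpa [Nat.mod_eq_of_lt hkK] using hkj
    · rw [extend, dif_pos hkK] at hk2
      have he : (⟨k % K, Nat.mod_lt _ hK0⟩ : Fin K) = ⟨k, hkK⟩ := by
        apply Fin.ext; simp [Nat.mod_eq_of_lt hkK]
      rw [he]
      exact hk2
  · intro k hk
    obtain ⟨-, hk1, hk2⟩ := Finset.mem_filter.mp hk
    simp only [Finset.coe_filter, Set.mem_setOf_eq, Finset.mem_range]
    refine ⟨hk1, ?_⟩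
    rw [extend, dif_pos k.isLt]
    exact hk2
  · intro k hk
    have hkj := Finset.mem_range.mp (Finset.mem_filter.mp hk).1
    simp [Nat.mod_eq_of_lt (show k < K by omega)]
  · intro k _
    apply Fin.ext
    simp [Nat.mod_eq_of_lt k.isLt]

/-- Chernoff-type counting bound for the number of try-sequences with many tries
inside a window `W`. -/
lemma count_hits_le [NeZero n] {K j : ℕ} (hj1 : 1 ≤ j) (hjK : j ≤ K) (hjn : j ≤ n)
    (W : Finset (ZMod n)) :
    ((Finset.univ.filter (fun tt : Fin K → Fin n =>
        W.card ≤ ((Finset.range j).filter (fun k => extend n K tt k ∈ W)).card)).card : ℝ)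
      ≤ ((j : ℝ) / n * Real.exp (((n : ℝ) - j) / n)) ^ W.card * (n : ℝ) ^ K := by
  classical
  set w := W.card with hwdef
  have hn0 : (0 : ℝ) < n := by
    have := NeZero.ne n; positivity
  have hj0 : (0 : ℝ) < j := by positivity
  set lam : ℝ := (n : ℝ) / j with hlam
  have hlam1 : 1 ≤ lam := by
    rw [hlam, le_div_iff₀ hj0]
    simpa using (Nat.cast_le (α := ℝ)).mpr hjn
  have hlam0 : 0 < lam := lt_of_lt_of_le one_pos hlam1
  -- the moment generating function
  have hmgf : ∑ tt : Fin K → Fin n,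
      lam ^ ((Finset.univ.filter (fun k : Fin K =>
          (k : ℕ) < j ∧ (((tt k : ℕ)) : ZMod n) ∈ W)).card)
      = (((n : ℝ) - w) + w * lam) ^ j * (n : ℝ) ^ (K - j) := by
    have hterm : ∀ tt : Fin K → Fin n,
        lam ^ ((Finset.univ.filter (fun k : Fin K =>
            (k : ℕ) < j ∧ (((tt k : ℕ)) : ZMod n) ∈ W)).card)
        = ∏ k : Fin K, (if (k : ℕ) < j ∧ (((tt k : ℕ)) : ZMod n) ∈ W then lam else 1) := by
      intro tt
      rw [← Finset.prod_filter, Finset.prod_const]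
    simp_rw [hterm]
    have hswap := Finset.prod_univ_sum (fun _ : Fin K => (Finset.univ : Finset (Fin n)))
      (fun k v => (if (k : ℕ) < j ∧ (((v : ℕ)) : ZMod n) ∈ W then lam else (1 : ℝ)))
    rw [Fintype.piFinset_univ] at hswap
    rw [← hswap]
    have hcol : ∀ k : Fin K, (∑ v : Fin n,
        (if (k : ℕ) < j ∧ (((v : ℕ)) : ZMod n) ∈ W then lam else (1 : ℝ)))
        = if (k : ℕ) < j then ((n : ℝ) - w) + w * lam else n := by
      intro k
      by_cases hk : (k : ℕ) < j
      · simp only [hk, true_and, if_true]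
        rw [Finset.sum_ite, Finset.sum_const, Finset.sum_const]
        rw [card_cast_mem W]
        have hcompl : (Finset.univ.filter (fun v : Fin n => ¬ ((((v : ℕ)) : ZMod n) ∈ W))).card
            = n - w := by
          have h1 := Finset.card_filter_add_card_filter_not
            (s := (Finset.univ : Finset (Fin n)))
            (p := fun v : Fin n => (((v : ℕ)) : ZMod n) ∈ W)
          rw [card_cast_mem W] at h1
          simp only [Finset.card_univ, Fintype.card_fin] at h1
          omega
        rw [hcompl]
        have hwn : w ≤ n := by
          rw [hwdef]
          calc W.card ≤ (Finset.univ : Finset (ZMod n)).card := Finset.card_le_univ W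
          _ = n := by rw [Finset.card_univ, ZMod.card]
        simp only [nsmul_eq_mul, smul_eq_mul, mul_one, Nat.cast_sub hwn]
        push_cast
        ring
      · simp only [hk, false_and, if_false]
        rw [Finset.sum_const, Finset.card_univ, Fintype.card_fin]
        simp
    rw [Finset.prod_congr rfl (fun k _ => hcol k)]
    rw [Finset.prod_ite, Finset.prod_const, Finset.prod_const]
    congr 2
    · exact card_fin_lt hjK
    · have h1 := Finset.card_filter_add_card_filter_not
        (s := (Finset.univ : Finset (Fin K))) (p := fun k : Fin K => (k : ℕ) < j)
      rw [card_fin_lt hjK] at h1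
      simp only [Finset.card_univ, Fintype.card_fin] at h1
      omega
  -- indicator ≤ λ^hits / λ^w
  have hcount : ((Finset.univ.filter (fun tt : Fin K → Fin n =>
      w ≤ ((Finset.range j).filter (fun k => extend n K tt k ∈ W)).card)).card : ℝ)
      ≤ (∑ tt : Fin K → Fin n,
          lam ^ ((Finset.univ.filter (fun k : Fin K =>
            (k : ℕ) < j ∧ (((tt k : ℕ)) : ZMod n) ∈ W)).card)) / lam ^ w := by
    rw [le_div_iff₀ (by positivity)]
    rw [Finset.card_filter]
    push_cast
    rw [Finset.sum_mul]
    apply Finset.sum_le_sum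
    intro tt _
    by_cases h : w ≤ ((Finset.range j).filter (fun k => extend n K tt k ∈ W)).card
    · rw [if_pos h, one_mul]
      rw [hits_eq hjK tt W] at h
      exact pow_le_pow_right₀ hlam1 h
    · rw [if_neg h, zero_mul]
      positivity
  rw [hmgf] at hcount
  refine le_trans hcount ?_
  -- now pure real-number estimates
  set δ : ℝ := ((n : ℝ) - j) / n with hδ
  have hδ0 : 0 ≤ δ := by
    rw [hδ]
    apply div_nonneg _ (le_of_lt hn0)
    have : (j : ℝ) ≤ n := by exact_mod_cast hjn
    linarith
  have hx0 : (0 : ℝ) ≤ (w : ℝ) * ((n : ℝ) - j) / ((n : ℝ) * j) := by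
    apply div_nonneg _ (by positivity)
    have : (j : ℝ) ≤ n := by exact_mod_cast hjn
    have : (0:ℝ) ≤ (n : ℝ) - j := by linarith
    positivity
  have hA : ((n : ℝ) - w + w * lam) = (n : ℝ) * (1 + (w : ℝ) * ((n : ℝ) - j) / ((n : ℝ) * j)) := by
    rw [hlam]
    field_simp
    ring
  have hApow : ((n : ℝ) - w + w * lam) ^ j ≤ (n : ℝ) ^ j * (Real.exp δ) ^ w := by
    rw [hA, mul_pow]
    apply mul_le_mul_of_nonneg_left _ (by positivity)
    calc (1 + (w : ℝ) * ((n : ℝ) - j) / ((n : ℝ) * j)) ^ j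
        ≤ (Real.exp ((w : ℝ) * ((n : ℝ) - j) / ((n : ℝ) * j))) ^ j := by
          apply pow_le_pow_left₀ (by linarith)
          have := Real.add_one_le_exp ((w : ℝ) * ((n : ℝ) - j) / ((n : ℝ) * j))
          linarith
      _ = Real.exp ((j : ℝ) * ((w : ℝ) * ((n : ℝ) - j) / ((n : ℝ) * j))) :=
          (Real.exp_nat_mul _ j).symm
      _ = Real.exp ((w : ℝ) * δ) := by
          congr 1
          rw [hδ]
          field_simp
      _ = (Real.exp δ) ^ w := Real.exp_nat_mul δ w
  have hlamw : lam ^ w = (((j : ℝ) / n) ^ w)⁻¹ := by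
    rw [hlam, ← inv_pow, inv_div]
  calc ((n : ℝ) - w + w * lam) ^ j * (n : ℝ) ^ (K - j) / lam ^ w
      ≤ ((n : ℝ) ^ j * (Real.exp δ) ^ w) * (n : ℝ) ^ (K - j) / lam ^ w := by
        gcongr
    _ = ((j : ℝ) / n * Real.exp δ) ^ w * ((n : ℝ) ^ j * (n : ℝ) ^ (K - j)) := by
        rw [hlamw, div_eq_mul_inv, inv_inv, mul_pow]
        ring
    _ = ((j : ℝ) / n * Real.exp δ) ^ w * (n : ℝ) ^ K := by
        rw [← pow_add]
        congr 2
        omega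

lemma rho_le {j : ℕ} (hn : 1 ≤ n) (hj : j ≤ n) :
    (j : ℝ) / n * Real.exp (((n : ℝ) - j) / n) ≤ 1 - (((n : ℝ) - j) / n) ^ 2 / 4 := by
  have hn0 : (0 : ℝ) < n := by exact_mod_cast hn
  have hj' : (j : ℝ) ≤ n := by exact_mod_cast hj
  set δ : ℝ := ((n : ℝ) - j) / n with hδ
  have hδ0 : 0 ≤ δ := by apply div_nonneg _ (le_of_lt hn0); linarith
  have hδ1 : δ ≤ 1 := by rw [hδ, div_le_one hn0]; linarith
  have hjn : (j : ℝ) / n = 1 - δ := by rw [hδ]; field_simp; ring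
  have hexp : Real.exp δ ≤ 1 + δ + 3 / 4 * δ ^ 2 := by
    have h := Real.exp_bound (x := δ) (by rw [abs_of_nonneg hδ0]; exact hδ1)
      (n := 2) (by norm_num)
    have hsum : ∑ m ∈ Finset.range 2, δ ^ m / m.factorial = 1 + δ := by
      simp [Finset.sum_range_succ]
    rw [hsum] at h
    have h2 := (abs_le.mp h).2
    have habs : |δ| ^ 2 = δ ^ 2 := by rw [abs_of_nonneg hδ0]
    rw [habs] at h2
    norm_num at h2
    nlinarith [h2]
  rw [hjn]
  nlinarith [hδ0, hδ1, Real.exp_pos δ, hexp]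

/-- Union bound: the probability (count) of having some occupied arc of length `T`. -/
lemma count_arc_le [NeZero n] {K j T : ℕ} (hj1 : 1 ≤ j) (hjK : j ≤ K) (hj2 : j + 2 ≤ n)
    (hT : 1 ≤ T) :
    ((Finset.univ.filter (fun tt : Fin K → Fin n =>
        ∃ v : ZMod n, ∀ r < T, v + (r : ZMod n) ∈ occ (extend n K tt) j)).card : ℝ)
      ≤ (n : ℝ) ^ 2 * ((j : ℝ) / n * Real.exp (((n : ℝ) - j) / n)) ^ T * (n : ℝ) ^ K := by
  classical
  set ρ : ℝ := (j : ℝ) / n * Real.exp (((n : ℝ) - j) / n) with hρ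
  have hn1 : 1 ≤ n := by omega
  have hρ0 : 0 ≤ ρ := by positivity
  have hρ1 : ρ ≤ 1 := by
    have := rho_le (n := n) (j := j) hn1 (by omega)
    have h2 : (0:ℝ) ≤ (((n : ℝ) - j) / n) ^ 2 / 4 := by positivity
    rw [hρ]; linarith
  have hsub : (Finset.univ.filter (fun tt : Fin K → Fin n =>
      ∃ v : ZMod n, ∀ r < T, v + (r : ZMod n) ∈ occ (extend n K tt) j))
      ⊆ ((Finset.univ : Finset (ZMod n)) ×ˢ Finset.Icc T j).biUnion
        (fun p => Finset.univ.filter (fun tt : Fin K → Fin n =>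
          p.2 ≤ ((Finset.range j).filter (fun k => extend n K tt k ∈ win p.1 p.2)).card)) := by
    intro tt htt
    obtain ⟨v, hv⟩ := (Finset.mem_filter.mp htt).2
    obtain ⟨a, w, hw1, hw2, hw3⟩ := window_overload hj2 hT hv
    rw [Finset.mem_biUnion]
    refine ⟨(a, w), ?_, ?_⟩
    · rw [Finset.mem_product]
      exact ⟨Finset.mem_univ _, Finset.mem_Icc.mpr ⟨hw1, hw2⟩⟩
    · rw [Finset.mem_filter]
      exact ⟨Finset.mem_univ _, hw3⟩
  have hstep := Finset.card_le_card hsub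
  have hstep2 := le_trans hstep (Finset.card_biUnion_le)
  have hcast : ((Finset.univ.filter (fun tt : Fin K → Fin n =>
      ∃ v : ZMod n, ∀ r < T, v + (r : ZMod n) ∈ occ (extend n K tt) j)).card : ℝ)
      ≤ ∑ p ∈ (Finset.univ : Finset (ZMod n)) ×ˢ Finset.Icc T j,
          ((Finset.univ.filter (fun tt : Fin K → Fin n =>
            p.2 ≤ ((Finset.range j).filter
              (fun k => extend n K tt k ∈ win p.1 p.2)).card)).card : ℝ) := by
    rw [← Nat.cast_sum]
    exact_mod_cast hstep2
  refine le_trans hcast ?_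
  have hbound : ∀ p ∈ (Finset.univ : Finset (ZMod n)) ×ˢ Finset.Icc T j,
      ((Finset.univ.filter (fun tt : Fin K → Fin n =>
        p.2 ≤ ((Finset.range j).filter
          (fun k => extend n K tt k ∈ win p.1 p.2)).card)).card : ℝ)
      ≤ ρ ^ T * (n : ℝ) ^ K := by
    rintro ⟨a, w⟩ hp
    rw [Finset.mem_product, Finset.mem_Icc] at hp
    obtain ⟨-, hTw, hwj⟩ := hp
    have hwn : w ≤ n := by omega
    have hfeq : (Finset.univ.filter (fun tt : Fin K → Fin n =>
        w ≤ ((Finset.range j).filter (fun k => extend n K tt k ∈ win a w)).card))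
        = (Finset.univ.filter (fun tt : Fin K → Fin n =>
          (win a w).card ≤ ((Finset.range j).filter
            (fun k => extend n K tt k ∈ win a w)).card)) := by
      rw [card_win hwn]
    calc ((Finset.univ.filter (fun tt : Fin K → Fin n =>
          w ≤ ((Finset.range j).filter (fun k => extend n K tt k ∈ win a w)).card)).card : ℝ)
        ≤ ρ ^ (win a w).card * (n : ℝ) ^ K := by
          rw [hfeq]
          exact count_hits_le hj1 hjK (by omega) (win a w)
      _ = ρ ^ w * (n : ℝ) ^ K := by rw [card_win hwn]
      _ ≤ ρ ^ T * (n : ℝ) ^ K := by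
          apply mul_le_mul_of_nonneg_right _ (by positivity)
          exact pow_le_pow_of_le_one hρ0 hρ1 hTw
  refine le_trans (Finset.sum_le_sum hbound) ?_
  rw [Finset.sum_const, Finset.card_product, Finset.card_univ, ZMod.card, Nat.card_Icc]
  have hcle : ((j + 1 - T) : ℕ) ≤ n := by omega
  rw [nsmul_eq_mul]
  have : ((n * (j + 1 - T) : ℕ) : ℝ) ≤ (n : ℝ) ^ 2 := by
    push_cast
    have h1 : ((j + 1 - T : ℕ) : ℝ) ≤ (n : ℝ) := by exact_mod_cast hcle
    have h2 : (0:ℝ) ≤ n := by positivity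
    calc (n : ℝ) * ((j + 1 - T : ℕ) : ℝ) ≤ (n:ℝ) * n := by
          apply mul_le_mul_of_nonneg_left h1 h2
      _ = (n : ℝ) ^ 2 := by ring
  calc ((n * (j + 1 - T) : ℕ) : ℝ) * (ρ ^ T * (n : ℝ) ^ K)
      ≤ (n : ℝ) ^ 2 * (ρ ^ T * (n : ℝ) ^ K) := by
        apply mul_le_mul_of_nonneg_right this (by positivity)
    _ = (n : ℝ) ^ 2 * ρ ^ T * (n : ℝ) ^ K := by ring

/-- Orthogonality of the coin flips. -/
lemma coin_sum {K : ℕ} (a : Fin K → ℝ) :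
    ∑ ε : Fin K → Bool, (∑ k, (if ε k then -(a k) else a k)) ^ 2
      = 2 ^ K * ∑ k, (a k) ^ 2 := by
  classical
  have expand : ∀ ε : Fin K → Bool, (∑ k, (if ε k then -(a k) else a k)) ^ 2
      = ∑ k, ∑ k', (if ε k then -(a k) else a k) * (if ε k' then -(a k') else a k') := by
    intro ε
    rw [sq, Finset.sum_mul_sum]
  simp_rw [expand]
  rw [Finset.sum_comm]
  have hcross : ∀ k k' : Fin K, k ≠ k' →
      ∑ ε : Fin K → Bool,
        (if ε k then -(a k) else a k) * (if ε k' then -(a k') else a k') = 0 := by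
    intro k k' hkk
    refine Finset.sum_involution (fun ε _ => Function.update ε k (!(ε k))) ?_ ?_ ?_ ?_
    · intro ε _
      have h1 : Function.update ε k (!(ε k)) k = !(ε k) := Function.update_self _ _ _
      have h2 : Function.update ε k (!(ε k)) k' = ε k' :=
        Function.update_of_ne (Ne.symm hkk) _ _
      rw [h1, h2]
      cases hb : ε k <;> simp [hb] <;> split <;> ring
    · intro ε _ _ hc
      have := congrFun hc k
      rw [Function.update_self] at this
      cases hεk : ε k <;> rw [hεk] at this <;> simp at this
    · intro ε _
      exact Finset.mem_univ _
    · intro ε _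
      funext x
      by_cases hx : x = k
      · subst hx
        simp [Function.update_self]
      · simp [Function.update_of_ne hx]
  have hdiag : ∀ k : Fin K,
      ∑ ε : Fin K → Bool,
        (if ε k then -(a k) else a k) * (if ε k then -(a k) else a k)
        = 2 ^ K * (a k) ^ 2 := by
    intro k
    have : ∀ ε : Fin K → Bool,
        (if ε k then -(a k) else a k) * (if ε k then -(a k) else a k) = (a k) ^ 2 := by
      intro ε
      cases hb : ε k <;> simp [sq] <;> ring
    rw [Finset.sum_congr rfl (fun ε _ => this ε), Finset.sum_const, Finset.card_univ]
    simp [Fintype.card_fun, nsmul_eq_mul]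
  have hmain : ∀ k : Fin K,
      ∑ k', ∑ ε : Fin K → Bool,
        (if ε k then -(a k) else a k) * (if ε k' then -(a k') else a k')
        = 2 ^ K * (a k) ^ 2 := by
    intro k
    have hterm : ∀ k' : Fin K, ∑ ε : Fin K → Bool,
        (if ε k then -(a k) else a k) * (if ε k' then -(a k') else a k')
        = if k' = k then 2 ^ K * (a k) ^ 2 else 0 := by
      intro k'
      by_cases h : k' = k
      · subst h
        rw [if_pos rfl]
        exact hdiag k'
      · rw [if_neg h]
        exact hcross k k' (fun hc => h hc.symm)
    rw [Finset.sum_congr rfl (fun k' _ => hterm k')]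
    rw [Finset.sum_ite_eq' Finset.univ k (fun _ => 2 ^ K * (a k) ^ 2)]
    simp
  calc ∑ k : Fin K, ∑ ε : Fin K → Bool, ∑ k',
        (if ε k then -(a k) else a k) * (if ε k' then -(a k') else a k')
      = ∑ k : Fin K, ∑ k', ∑ ε : Fin K → Bool,
        (if ε k then -(a k) else a k) * (if ε k' then -(a k') else a k') := by
        refine Finset.sum_congr rfl (fun k _ => ?_)
        rw [Finset.sum_comm]
    _ = ∑ k : Fin K, 2 ^ K * (a k) ^ 2 := Finset.sum_congr rfl (fun k _ => hmain k)
    _ = 2 ^ K * ∑ k, (a k) ^ 2 := by rw [Finset.mul_sum]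

lemma sq_le_two_pow {m : ℕ} (hm : 7 ≤ m) : m ^ 2 ≤ 2 ^ (m - 1) := by
  induction m with
  | zero => omega
  | succ m ih =>
    rcases Nat.lt_or_ge m 7 with h | h
    · interval_cases m <;> simp_all <;> omega
    · have ihm := ih (by omega)
      have e1 : (m + 1) ^ 2 ≤ 2 * m ^ 2 := by nlinarith
      calc (m + 1) ^ 2 ≤ 2 * m ^ 2 := e1
        _ ≤ 2 * 2 ^ (m - 1) := by omega
        _ = 2 ^ (m - 1 + 1) := by rw [pow_succ]; ring
        _ = 2 ^ (m + 1 - 1) := by congr 1; omega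

lemma log_sq_le {m : ℕ} (hm : 64 ≤ m) : (Nat.log 2 m + 1) ^ 2 ≤ m := by
  have h6 : 6 ≤ Nat.log 2 m := by
    have h : 2 ^ 6 ≤ m := by omega
    exact Nat.le_log_of_pow_le (by norm_num) h
  calc (Nat.log 2 m + 1) ^ 2 ≤ 2 ^ (Nat.log 2 m + 1 - 1) := sq_le_two_pow (by omega)
    _ = 2 ^ Nat.log 2 m := rfl
    _ ≤ m := Nat.pow_log_le_self 2 (by omega)

/-- The eighth-root scale. -/
def s8 (m : ℕ) : ℕ := Nat.sqrt (Nat.sqrt (Nat.sqrt m))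

lemma s8_pos {m : ℕ} (hm : 1 ≤ m) : 1 ≤ s8 m := by
  have h1 : 1 ≤ Nat.sqrt m := Nat.le_sqrt.mpr (by omega)
  have h2 : 1 ≤ Nat.sqrt (Nat.sqrt m) := Nat.le_sqrt.mpr (by omega)
  exact Nat.le_sqrt.mpr (by nlinarith)

lemma s8_pow4_le {m : ℕ} : (s8 m) ^ 4 ≤ Nat.sqrt m := by
  have h1 : s8 m ^ 2 ≤ Nat.sqrt (Nat.sqrt m) := Nat.sqrt_le' _
  have h2 : Nat.sqrt (Nat.sqrt m) ^ 2 ≤ Nat.sqrt m := Nat.sqrt_le' _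
  calc (s8 m) ^ 4 = (s8 m ^ 2) ^ 2 := by ring
    _ ≤ (Nat.sqrt (Nat.sqrt m)) ^ 2 := Nat.pow_le_pow_left h1 2
    _ ≤ Nat.sqrt m := h2

/-- `n⁴ ρ_j^T ≤ 1` for "good" indices `j`. -/
lemma rho_pow_small {j : ℕ} (hn : 1 ≤ n) (hj : j ≤ n) (hgood : n ≤ s8 n * (n - j)) :
    (n : ℝ) ^ 4 * ((j : ℝ) / n * Real.exp (((n : ℝ) - j) / n))
      ^ (16 * (s8 n) ^ 2 * (Nat.log 2 n + 1)) ≤ 1 := by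
  set s := s8 n with hs
  set L := Nat.log 2 n + 1 with hL
  have hs1 : 1 ≤ s := s8_pos hn
  have hn0 : (0 : ℝ) < n := by exact_mod_cast hn
  have hs0 : (0 : ℝ) < s := by exact_mod_cast hs1
  set δ : ℝ := ((n : ℝ) - j) / n with hδ
  have hj' : (j : ℝ) ≤ n := by exact_mod_cast hj
  have hδ0 : 0 ≤ δ := by apply div_nonneg _ (le_of_lt hn0); linarith
  have hδs : 1 / (s : ℝ) ≤ δ := by
    have hcast : (n : ℝ) ≤ (s : ℝ) * ((n : ℝ) - (j : ℝ)) := by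
      have h2 : ((n : ℕ) : ℝ) ≤ ((s * (n - j) : ℕ) : ℝ) := by exact_mod_cast hgood
      push_cast [Nat.cast_sub hj] at h2
      linarith
    rw [hδ, div_le_div_iff₀ hs0 hn0]
    nlinarith
  set ρ : ℝ := (j : ℝ) / n * Real.exp δ with hρ
  have hρ0 : 0 ≤ ρ := by positivity
  have hρle : ρ ≤ 1 - 1 / (4 * (s : ℝ) ^ 2) := by
    have h1 := rho_le (n := n) (j := j) hn hj
    have h2 : 1 / (4 * (s : ℝ) ^ 2) ≤ δ ^ 2 / 4 := by
      rw [div_le_div_iff₀ (by positivity) (by norm_num)]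
      have : (1 / (s : ℝ)) ^ 2 ≤ δ ^ 2 := by
        apply pow_le_pow_left₀ (by positivity) hδs
      calc (1 : ℝ) * 4 = 4 * (1 / (s:ℝ))^2 * (s:ℝ)^2 := by field_simp
        _ ≤ 4 * δ^2 * (s:ℝ)^2 := by nlinarith
        _ = δ ^ 2 * (4 * (s:ℝ)^2) := by ring
    rw [hρ, hδ]
    calc (j : ℝ) / n * Real.exp (((n : ℝ) - j) / n) ≤ 1 - (((n : ℝ) - j) / n) ^ 2 / 4 := h1
      _ ≤ 1 - 1 / (4 * (s : ℝ) ^ 2) := by rw [← hδ]; linarith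
  have hx : (0:ℝ) < 1 / (4 * (s : ℝ) ^ 2) := by positivity
  have hx1 : 1 / (4 * (s : ℝ) ^ 2) ≤ 1 := by
    rw [div_le_one (by positivity)]
    have h1 : (1:ℝ) ≤ (s:ℝ) := by exact_mod_cast hs1
    nlinarith
  -- ρ^(4 s²) ≤ e⁻¹ ≤ 1/2
  have hkey : ρ ^ (4 * s ^ 2) ≤ 1 / 2 := by
    have e1 : ρ ^ (4 * s ^ 2) ≤ (1 - 1 / (4 * (s : ℝ) ^ 2)) ^ (4 * s ^ 2) :=
      pow_le_pow_left₀ hρ0 hρle _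
    have e2 : (1 - 1 / (4 * (s : ℝ) ^ 2)) ^ (4 * s ^ 2)
        ≤ (Real.exp (-(1 / (4 * (s : ℝ) ^ 2)))) ^ (4 * s ^ 2) := by
      apply pow_le_pow_left₀ (by linarith)
      have := Real.add_one_le_exp (-(1 / (4 * (s : ℝ) ^ 2)))
      linarith
    have e3 : (Real.exp (-(1 / (4 * (s : ℝ) ^ 2)))) ^ (4 * s ^ 2)
        = Real.exp (-(1:ℝ)) := by
      rw [← Real.exp_nat_mul]
      congr 1
      have : ((4 * s ^ 2 : ℕ) : ℝ) = 4 * (s:ℝ)^2 := by push_cast; ring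
      rw [this]
      field_simp
    have e4 : Real.exp (-(1:ℝ)) ≤ 1 / 2 := by
      rw [Real.exp_neg, one_div]
      have h2 : (2:ℝ) ≤ Real.exp 1 := by
        have := Real.add_one_le_exp (1:ℝ)
        linarith
      exact inv_anti₀ (by norm_num) h2
    calc ρ ^ (4 * s ^ 2) ≤ _ := e1
      _ ≤ _ := e2
      _ = _ := e3
      _ ≤ _ := e4
  have hhalf : (0:ℝ) ≤ 1/2 := by norm_num
  have hfinal : ρ ^ (16 * s ^ 2 * L) ≤ ((1:ℝ) / 2) ^ (4 * L) := by
    have hrw : 16 * s ^ 2 * L = (4 * s ^ 2) * (4 * L) := by ring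
    rw [hrw, pow_mul]
    exact pow_le_pow_left₀ (by positivity) hkey _
  have h2L : (n : ℝ) ≤ 2 ^ L := by
    have := Nat.lt_pow_succ_log_self (show 1 < 2 by norm_num) n
    have h2 : n ≤ 2 ^ L := by rw [hL]; omega
    exact_mod_cast h2
  have h2L0 : (0:ℝ) < 2 ^ L := by positivity
  calc (n : ℝ) ^ 4 * ρ ^ (16 * s ^ 2 * L)
      ≤ ((2:ℝ) ^ L) ^ 4 * ((1:ℝ) / 2) ^ (4 * L) := by
        apply mul_le_mul (by apply pow_le_pow_left₀ (le_of_lt hn0) h2L) hfinal (by positivity)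
          (by positivity)
    _ = (2:ℝ) ^ (L * 4) * (1 / 2 ^ (4 * L)) := by
        rw [← pow_mul, div_pow, one_pow]
    _ = 1 := by
        rw [mul_comm L 4]
        field_simp

/-- Pointwise bound on the squared half-difference of `L` and `R`. -/
lemma a_sq_le [NeZero n] {K : ℕ} (hK : K + 1 = n) (tt : Fin K → Fin n) (k : Fin K)
    {T : ℕ} (hT : 1 ≤ T) :
    (((Lsize (extend n K tt) ((k : ℕ) + 1) : ℝ)
        - (Rsize (extend n K tt) ((k : ℕ) + 1) : ℝ)) / 2) ^ 2
      ≤ (T : ℝ) ^ 2 + (n : ℝ) ^ 2 *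
        (if (∃ v : ZMod n, ∀ r < T, v + (r : ZMod n) ∈ occ (extend n K tt) (k : ℕ))
          then 1 else 0) := by
  set t := extend n K tt with ht
  set j := (k : ℕ) with hj
  have hjn : j + 2 ≤ n := by
    have := k.isLt
    omega
  have hcard : (occ t j).card < n := lt_of_le_of_lt (card_occ_le t j) (by omega)
  have hLeq : Lsize t (j + 1) = blockSize (occ t j) (spot t j) := rfl
  have hReq : Rsize t (j + 1) = blockSize (occ t j) (nextEmpty (occ t j) (spot t j)) := rfl
  have hLn : Lsize t (j + 1) ≤ n := by rw [hLeq]; exact blockSize_le hcard _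
  have hRn : Rsize t (j + 1) ≤ n := by rw [hReq]; exact blockSize_le hcard _
  by_cases harc : ∃ v : ZMod n, ∀ r < T, v + (r : ZMod n) ∈ occ t j
  · rw [if_pos harc]
    have h1 : ((Lsize t (j + 1) : ℝ)) ≤ n := by exact_mod_cast hLn
    have h2 : ((Rsize t (j + 1) : ℝ)) ≤ n := by exact_mod_cast hRn
    have h3 : (0 : ℝ) ≤ (Lsize t (j + 1) : ℝ) := by positivity
    have h4 : (0 : ℝ) ≤ (Rsize t (j + 1) : ℝ) := by positivity
    have h5 : (0 : ℝ) ≤ (T : ℝ) ^ 2 := by positivity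
    nlinarith
  · rw [if_neg harc]
    have hLT : Lsize t (j + 1) ≤ T := by
      by_contra hc
      push_neg at hc
      refine harc ⟨spot t j - (T : ZMod n), fun r hr => ?_⟩
      exact arc_of_blockSize (show T + 1 ≤ blockSize (occ t j) (spot t j) by omega) r hr
    have hRT : Rsize t (j + 1) ≤ T := by
      by_contra hc
      push_neg at hc
      refine harc ⟨nextEmpty (occ t j) (spot t j) - (T : ZMod n), fun r hr => ?_⟩
      exact arc_of_blockSize
        (show T + 1 ≤ blockSize (occ t j) (nextEmpty (occ t j) (spot t j)) by omega) r hr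
    have h1 : ((Lsize t (j + 1) : ℝ)) ≤ T := by exact_mod_cast hLT
    have h2 : ((Rsize t (j + 1) : ℝ)) ≤ T := by exact_mod_cast hRT
    have h3 : (0 : ℝ) ≤ (Lsize t (j + 1) : ℝ) := by positivity
    have h4 : (0 : ℝ) ≤ (Rsize t (j + 1) : ℝ) := by positivity
    nlinarith

/-- Expectation bound for a "good" index. -/
lemma sum_a_sq_good [NeZero n] {K : ℕ} (hK : K + 1 = n) (k : Fin K)
    (hgood : n ≤ s8 n * (n - (k : ℕ))) :
    ∑ tt : Fin K → Fin n,
      (((Lsize (extend n K tt) ((k : ℕ) + 1) : ℝ)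
        - (Rsize (extend n K tt) ((k : ℕ) + 1) : ℝ)) / 2) ^ 2
      ≤ (((16 * (s8 n) ^ 2 * (Nat.log 2 n + 1) : ℕ) : ℝ) ^ 2 + 1) * (n : ℝ) ^ K := by
  classical
  set T : ℕ := 16 * (s8 n) ^ 2 * (Nat.log 2 n + 1) with hTdef
  have hn1 : 1 ≤ n := by omega
  have hs1 : 1 ≤ s8 n := s8_pos hn1
  have hT1 : 1 ≤ T := by
    rw [hTdef]
    have : 1 ≤ (s8 n) ^ 2 := Nat.one_le_pow _ _ (by omega)
    nlinarith
  set j := (k : ℕ) with hj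
  have hjn : j + 2 ≤ n := by have := k.isLt; omega
  have hstep1 : ∑ tt : Fin K → Fin n,
      (((Lsize (extend n K tt) ((k : ℕ) + 1) : ℝ)
        - (Rsize (extend n K tt) ((k : ℕ) + 1) : ℝ)) / 2) ^ 2
      ≤ ∑ tt : Fin K → Fin n, ((T : ℝ) ^ 2 + (n : ℝ) ^ 2 *
        (if (∃ v : ZMod n, ∀ r < T, v + (r : ZMod n) ∈ occ (extend n K tt) j)
          then 1 else 0)) :=
    Finset.sum_le_sum (fun tt _ => a_sq_le hK tt k hT1)
  refine le_trans hstep1 ?_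
  rw [Finset.sum_add_distrib, Finset.sum_const, ← Finset.mul_sum]
  have hcardfn : (Finset.univ : Finset (Fin K → Fin n)).card = n ^ K := by
    rw [Finset.card_univ, Fintype.card_fun]
    simp
  have harc_sum : ∑ tt : Fin K → Fin n,
      (if (∃ v : ZMod n, ∀ r < T, v + (r : ZMod n) ∈ occ (extend n K tt) j)
        then (1:ℝ) else 0)
      = ((Finset.univ.filter (fun tt : Fin K → Fin n =>
          ∃ v : ZMod n, ∀ r < T, v + (r : ZMod n) ∈ occ (extend n K tt) j)).card : ℝ) := by
    rw [Finset.sum_boole]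
  rw [harc_sum]
  have harc_le : (n : ℝ) ^ 2 * ((Finset.univ.filter (fun tt : Fin K → Fin n =>
      ∃ v : ZMod n, ∀ r < T, v + (r : ZMod n) ∈ occ (extend n K tt) j)).card : ℝ)
      ≤ (n : ℝ) ^ K := by
    rcases Nat.eq_zero_or_pos j with hj0 | hj1
    · have hempty : (Finset.univ.filter (fun tt : Fin K → Fin n =>
          ∃ v : ZMod n, ∀ r < T, v + (r : ZMod n) ∈ occ (extend n K tt) j)) = ∅ := by
        rw [Finset.filter_eq_empty_iff]
        rintro tt - ⟨v, hv⟩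
        have := hv 0 hT1
        rw [hj0] at this
        simp [occ] at this
      rw [hempty]
      simp only [Finset.card_empty, Nat.cast_zero, mul_zero]
      positivity
    · have hcount := count_arc_le (K := K) (j := j) (T := T) hj1
        (by have := k.isLt; omega) hjn hT1
      have hrho := rho_pow_small (n := n) (j := j) hn1 (by omega) hgood
      calc (n : ℝ) ^ 2 * ((Finset.univ.filter (fun tt : Fin K → Fin n =>
            ∃ v : ZMod n, ∀ r < T, v + (r : ZMod n) ∈ occ (extend n K tt) j)).card : ℝ)
          ≤ (n : ℝ) ^ 2 * ((n : ℝ) ^ 2 * ((j : ℝ) / n * Real.exp (((n : ℝ) - j) / n)) ^ T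
              * (n : ℝ) ^ K) := by
            apply mul_le_mul_of_nonneg_left hcount (by positivity)
        _ = ((n : ℝ) ^ 4 * ((j : ℝ) / n * Real.exp (((n : ℝ) - j) / n)) ^ T) * (n : ℝ) ^ K := by
            ring
        _ ≤ 1 * (n : ℝ) ^ K := by
            apply mul_le_mul_of_nonneg_right _ (by positivity)
            rw [hTdef]
            exact hrho
        _ = (n : ℝ) ^ K := by ring
  calc (Finset.univ : Finset (Fin K → Fin n)).card • (T : ℝ) ^ 2
        + (n : ℝ) ^ 2 * ((Finset.univ.filter (fun tt : Fin K → Fin n =>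
          ∃ v : ZMod n, ∀ r < T, v + (r : ZMod n) ∈ occ (extend n K tt) j)).card : ℝ)
      ≤ (Finset.univ : Finset (Fin K → Fin n)).card • (T : ℝ) ^ 2 + (n : ℝ) ^ K := by
        linarith [harc_le]
    _ = ((T : ℝ) ^ 2 + 1) * (n : ℝ) ^ K := by
        rw [hcardfn, nsmul_eq_mul]
        push_cast
        ring

/-- Crude expectation bound for any index. -/
lemma sum_a_sq_bad [NeZero n] {K : ℕ} (hK : K + 1 = n) (k : Fin K) :
    ∑ tt : Fin K → Fin n,
      (((Lsize (extend n K tt) ((k : ℕ) + 1) : ℝ)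
        - (Rsize (extend n K tt) ((k : ℕ) + 1) : ℝ)) / 2) ^ 2
      ≤ (n : ℝ) ^ 2 * (n : ℝ) ^ K := by
  classical
  set j := (k : ℕ) with hj
  have hjn : j + 2 ≤ n := by have := k.isLt; omega
  have hptw : ∀ tt : Fin K → Fin n,
      (((Lsize (extend n K tt) ((k : ℕ) + 1) : ℝ)
        - (Rsize (extend n K tt) ((k : ℕ) + 1) : ℝ)) / 2) ^ 2 ≤ (n : ℝ) ^ 2 := by
    intro tt
    set t := extend n K tt with ht
    have hcard : (occ t j).card < n := lt_of_le_of_lt (card_occ_le t j) (by omega)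
    have hLn : Lsize t (j + 1) ≤ n := blockSize_le hcard _
    have hRn : Rsize t (j + 1) ≤ n := blockSize_le hcard _
    have h1 : ((Lsize t (j + 1) : ℝ)) ≤ n := by exact_mod_cast hLn
    have h2 : ((Rsize t (j + 1) : ℝ)) ≤ n := by exact_mod_cast hRn
    have h3 : (0 : ℝ) ≤ (Lsize t (j + 1) : ℝ) := by positivity
    have h4 : (0 : ℝ) ≤ (Rsize t (j + 1) : ℝ) := by positivity
    nlinarith
  calc ∑ tt : Fin K → Fin n,
        (((Lsize (extend n K tt) ((k : ℕ) + 1) : ℝ)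
          - (Rsize (extend n K tt) ((k : ℕ) + 1) : ℝ)) / 2) ^ 2
      ≤ ∑ _tt : Fin K → Fin n, (n : ℝ) ^ 2 := Finset.sum_le_sum (fun tt _ => hptw tt)
    _ = (n : ℝ) ^ 2 * (n : ℝ) ^ K := by
        rw [Finset.sum_const, Finset.card_univ, Fintype.card_fun, Fintype.card_fin,
          Fintype.card_fin, nsmul_eq_mul]
        push_cast
        ring

lemma s8_le_self (m : ℕ) : s8 m ≤ m :=
  le_trans (Nat.sqrt_le_self _) (le_trans (Nat.sqrt_le_self _) (Nat.sqrt_le_self m))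

lemma card_bad_le [NeZero n] {K : ℕ} (hK : K + 1 = n) (hs1 : 1 ≤ s8 n) :
    (Finset.univ.filter (fun k : Fin K => s8 n * (n - (k : ℕ)) < n)).card ≤ n / s8 n := by
  classical
  set s := s8 n with hs
  have hsn : s ≤ n := s8_le_self n
  have hds : 1 ≤ n / s := (Nat.le_div_iff_mul_le (by omega)).mpr (by omega)
  have hdsn : n / s ≤ n := Nat.div_le_self _ _
  set m : ℕ := n - n / s with hm
  have hmK : m ≤ K := by omega
  have hsub : (Finset.univ.filter (fun k : Fin K => s * (n - (k : ℕ)) < n))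
      ⊆ (Finset.univ.filter (fun k : Fin K => ¬ ((k : ℕ) < m))) := by
    intro k hk
    have hbad := (Finset.mem_filter.mp hk).2
    rw [Finset.mem_filter]
    refine ⟨Finset.mem_univ _, ?_⟩
    have hd : n - (k : ℕ) ≤ n / s := by
      rw [Nat.le_div_iff_mul_le (by omega), mul_comm]
      omega
    omega
  have hcard := Finset.card_le_card hsub
  have hneg : (Finset.univ.filter (fun k : Fin K => ¬ ((k : ℕ) < m))).card = K - m := by
    have h1 := Finset.card_filter_add_card_filter_not
      (s := (Finset.univ : Finset (Fin K))) (p := fun k : Fin K => (k : ℕ) < m)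
    rw [card_fin_lt hmK] at h1
    simp only [Finset.card_univ, Fintype.card_fin] at h1
    omega
  rw [hneg] at hcard
  omega

/-- with independent fair coin flips `ε₁,…,ε_{n-1}` independent of the
parking, `A_{k,n} = ε_k L_{k,n} + (1-ε_k) R_{k,n}`, `F_n = Σ (L_{k,n}+R_{k,n})/2`,
one has `‖F_n - C^{QF}_n‖₂ = o(n^{3/2})`, i.e. `E[(F_n - C^{QF}_n)²]/n³ → 0`.
The expectation is over the uniform measure on `{0,…,n-1}^{n-1} × {0,1}^{n-1}`. -/
theorem quickFind_symmetrization :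
    Tendsto (fun n : ℕ =>
        ((∑ p : (Fin (n - 1) → Fin n) × (Fin (n - 1) → Bool),
            (∑ k : Fin (n - 1),
              (((Lsize (extend n (n - 1) p.1) ((k : ℕ) + 1) : ℝ)
                  + (Rsize (extend n (n - 1) p.1) ((k : ℕ) + 1) : ℝ)) / 2
                - (if p.2 k then (Lsize (extend n (n - 1) p.1) ((k : ℕ) + 1) : ℝ)
                   else (Rsize (extend n (n - 1) p.1) ((k : ℕ) + 1) : ℝ)))) ^ 2)
          / ((n : ℝ) ^ (n - 1) * 2 ^ (n - 1))) / (n : ℝ) ^ 3)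
      atTop (𝓝 0) := by
  classical
  have hsq : Tendsto (fun m : ℕ => Nat.sqrt m) atTop atTop := by
    rw [Filter.tendsto_atTop_atTop]
    intro b
    exact ⟨b * b, fun m hm => Nat.le_sqrt.mpr hm⟩
  have hs8t : Tendsto (fun m : ℕ => s8 m) atTop atTop := by
    have h := hsq.comp (hsq.comp hsq)
    simpa [Function.comp_def, s8] using h
  have hupper : Tendsto (fun n : ℕ => 257 / (Nat.sqrt n : ℝ) + 1 / (s8 n : ℝ))
      atTop (𝓝 0) := by
    have h1 : Tendsto (fun n : ℕ => ((Nat.sqrt n : ℕ) : ℝ)) atTop atTop :=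
      tendsto_natCast_atTop_atTop.comp hsq
    have h2 : Tendsto (fun n : ℕ => ((s8 n : ℕ) : ℝ)) atTop atTop :=
      tendsto_natCast_atTop_atTop.comp hs8t
    have g1 := h1.const_div_atTop 257
    have g2 := h2.const_div_atTop 1
    simpa using g1.add g2
  refine tendsto_of_tendsto_of_tendsto_of_le_of_le' tendsto_const_nhds hupper ?_ ?_
  · filter_upwards with n
    positivity
  · filter_upwards [eventually_ge_atTop 64] with n hn
    haveI : NeZero n := ⟨by omega⟩
    set K : ℕ := n - 1 with hKdef
    have hK : K + 1 = n := by omega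
    set T : ℕ := 16 * (s8 n) ^ 2 * (Nat.log 2 n + 1) with hTdef
    have hs1 : 1 ≤ s8 n := s8_pos (by omega)
    have hn0 : (0 : ℝ) < n := by positivity
    have hnK0 : (0 : ℝ) < (n : ℝ) ^ K := by positivity
    have h2K0 : (0 : ℝ) < (2 : ℝ) ^ K := by positivity
    -- step 1 : the coin average
    have hnum : (∑ p : (Fin K → Fin n) × (Fin K → Bool),
        (∑ k : Fin K,
          (((Lsize (extend n K p.1) ((k : ℕ) + 1) : ℝ)
              + (Rsize (extend n K p.1) ((k : ℕ) + 1) : ℝ)) / 2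
            - (if p.2 k then (Lsize (extend n K p.1) ((k : ℕ) + 1) : ℝ)
               else (Rsize (extend n K p.1) ((k : ℕ) + 1) : ℝ)))) ^ 2)
        = 2 ^ K * ∑ tt : Fin K → Fin n, ∑ k : Fin K,
            (((Lsize (extend n K tt) ((k : ℕ) + 1) : ℝ)
              - (Rsize (extend n K tt) ((k : ℕ) + 1) : ℝ)) / 2) ^ 2 := by
      rw [Fintype.sum_prod_type]
      rw [Finset.mul_sum]
      refine Finset.sum_congr rfl (fun tt _ => ?_)
      have hsummand : ∀ ε : Fin K → Bool,
          (∑ k : Fin K,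
            (((Lsize (extend n K tt) ((k : ℕ) + 1) : ℝ)
                + (Rsize (extend n K tt) ((k : ℕ) + 1) : ℝ)) / 2
              - (if ε k then (Lsize (extend n K tt) ((k : ℕ) + 1) : ℝ)
                 else (Rsize (extend n K tt) ((k : ℕ) + 1) : ℝ))))
          = ∑ k : Fin K, (if ε k then
              -((((Lsize (extend n K tt) ((k : ℕ) + 1) : ℝ)
                - (Rsize (extend n K tt) ((k : ℕ) + 1) : ℝ)) / 2))
            else ((((Lsize (extend n K tt) ((k : ℕ) + 1) : ℝ)
                - (Rsize (extend n K tt) ((k : ℕ) + 1) : ℝ)) / 2))) := by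
        intro ε
        refine Finset.sum_congr rfl (fun k _ => ?_)
        cases hb : ε k <;> simp [hb] <;> ring
      calc ∑ ε : Fin K → Bool,
            (∑ k : Fin K,
              (((Lsize (extend n K tt) ((k : ℕ) + 1) : ℝ)
                  + (Rsize (extend n K tt) ((k : ℕ) + 1) : ℝ)) / 2
                - (if ε k then (Lsize (extend n K tt) ((k : ℕ) + 1) : ℝ)
                   else (Rsize (extend n K tt) ((k : ℕ) + 1) : ℝ)))) ^ 2
          = ∑ ε : Fin K → Bool,
            (∑ k : Fin K, (if ε k then
              -((((Lsize (extend n K tt) ((k : ℕ) + 1) : ℝ)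
                - (Rsize (extend n K tt) ((k : ℕ) + 1) : ℝ)) / 2))
            else ((((Lsize (extend n K tt) ((k : ℕ) + 1) : ℝ)
                - (Rsize (extend n K tt) ((k : ℕ) + 1) : ℝ)) / 2)))) ^ 2 := by
            exact Finset.sum_congr rfl (fun ε _ => by rw [hsummand ε])
        _ = 2 ^ K * ∑ k : Fin K,
            ((((Lsize (extend n K tt) ((k : ℕ) + 1) : ℝ)
              - (Rsize (extend n K tt) ((k : ℕ) + 1) : ℝ)) / 2)) ^ 2 :=
            coin_sum _
    rw [hnum]
    -- step 2 : cancel the factor 2^K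
    have hcancel : 2 ^ K * (∑ tt : Fin K → Fin n, ∑ k : Fin K,
        (((Lsize (extend n K tt) ((k : ℕ) + 1) : ℝ)
          - (Rsize (extend n K tt) ((k : ℕ) + 1) : ℝ)) / 2) ^ 2)
        / ((n : ℝ) ^ K * 2 ^ K)
        = (∑ tt : Fin K → Fin n, ∑ k : Fin K,
          (((Lsize (extend n K tt) ((k : ℕ) + 1) : ℝ)
            - (Rsize (extend n K tt) ((k : ℕ) + 1) : ℝ)) / 2) ^ 2) / (n : ℝ) ^ K := by
      rw [mul_comm ((n : ℝ) ^ K) ((2 : ℝ) ^ K), mul_div_mul_left _ _ (ne_of_gt h2K0)]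
    rw [hcancel]
    -- step 3 : bound the sum
    have hQle : (∑ tt : Fin K → Fin n, ∑ k : Fin K,
        (((Lsize (extend n K tt) ((k : ℕ) + 1) : ℝ)
          - (Rsize (extend n K tt) ((k : ℕ) + 1) : ℝ)) / 2) ^ 2)
        ≤ (((T : ℝ) ^ 2 + 1) * K + ((n / s8 n : ℕ) : ℝ) * (n : ℝ) ^ 2) * (n : ℝ) ^ K := by
      rw [Finset.sum_comm]
      have hterm : ∀ k : Fin K, (∑ tt : Fin K → Fin n,
          (((Lsize (extend n K tt) ((k : ℕ) + 1) : ℝ)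
            - (Rsize (extend n K tt) ((k : ℕ) + 1) : ℝ)) / 2) ^ 2)
          ≤ (if n ≤ s8 n * (n - (k : ℕ)) then ((T : ℝ) ^ 2 + 1) else (n : ℝ) ^ 2)
              * (n : ℝ) ^ K := by
        intro k
        by_cases hg : n ≤ s8 n * (n - (k : ℕ))
        · rw [if_pos hg]
          exact sum_a_sq_good hK k hg
        · rw [if_neg hg]
          exact sum_a_sq_bad hK k
      refine le_trans (Finset.sum_le_sum (fun k _ => hterm k)) ?_
      rw [← Finset.sum_mul]
      apply mul_le_mul_of_nonneg_right _ (le_of_lt hnK0)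
      rw [Finset.sum_ite, Finset.sum_const, Finset.sum_const]
      have hc1 : (Finset.univ.filter (fun k : Fin K => n ≤ s8 n * (n - (k : ℕ)))).card ≤ K := by
        simpa using Finset.card_filter_le Finset.univ (fun k : Fin K => n ≤ s8 n * (n - (k : ℕ)))
      have hc2 : (Finset.univ.filter
          (fun k : Fin K => ¬ (n ≤ s8 n * (n - (k : ℕ))))).card ≤ n / s8 n := by
        have : (Finset.univ.filter (fun k : Fin K => ¬ (n ≤ s8 n * (n - (k : ℕ)))))
            = (Finset.univ.filter (fun k : Fin K => s8 n * (n - (k : ℕ)) < n)) := by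
          apply Finset.filter_congr
          intro k _
          simp [not_le]
        rw [this]
        exact card_bad_le hK hs1
      have hT2pos : (0 : ℝ) ≤ (T : ℝ) ^ 2 + 1 := by positivity
      have hn2pos : (0 : ℝ) ≤ (n : ℝ) ^ 2 := by positivity
      calc (Finset.univ.filter (fun k : Fin K => n ≤ s8 n * (n - (k : ℕ)))).card
              • ((T : ℝ) ^ 2 + 1)
            + (Finset.univ.filter
                (fun k : Fin K => ¬ (n ≤ s8 n * (n - (k : ℕ))))).card • (n : ℝ) ^ 2
          ≤ (K : ℝ) * ((T : ℝ) ^ 2 + 1) + ((n / s8 n : ℕ) : ℝ) * (n : ℝ) ^ 2 := by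
            rw [nsmul_eq_mul, nsmul_eq_mul]
            apply add_le_add
            · apply mul_le_mul_of_nonneg_right _ hT2pos
              exact_mod_cast hc1
            · apply mul_le_mul_of_nonneg_right _ hn2pos
              exact_mod_cast hc2
        _ = ((T : ℝ) ^ 2 + 1) * K + ((n / s8 n : ℕ) : ℝ) * (n : ℝ) ^ 2 := by ring
    -- step 4 : conclude
    have hmono : (∑ tt : Fin K → Fin n, ∑ k : Fin K,
        (((Lsize (extend n K tt) ((k : ℕ) + 1) : ℝ)
          - (Rsize (extend n K tt) ((k : ℕ) + 1) : ℝ)) / 2) ^ 2) / (n : ℝ) ^ K / (n : ℝ) ^ 3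
        ≤ (((T : ℝ) ^ 2 + 1) * K + ((n / s8 n : ℕ) : ℝ) * (n : ℝ) ^ 2) / (n : ℝ) ^ 3 := by
      rw [div_div]
      rw [div_le_div_iff₀ (by positivity) (by positivity)]
      calc (∑ tt : Fin K → Fin n, ∑ k : Fin K,
            (((Lsize (extend n K tt) ((k : ℕ) + 1) : ℝ)
              - (Rsize (extend n K tt) ((k : ℕ) + 1) : ℝ)) / 2) ^ 2) * (n : ℝ) ^ 3
          ≤ ((((T : ℝ) ^ 2 + 1) * K + ((n / s8 n : ℕ) : ℝ) * (n : ℝ) ^ 2) * (n : ℝ) ^ K)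
              * (n : ℝ) ^ 3 := by
            apply mul_le_mul_of_nonneg_right hQle (by positivity)
        _ = (((T : ℝ) ^ 2 + 1) * K + ((n / s8 n : ℕ) : ℝ) * (n : ℝ) ^ 2)
              * ((n : ℝ) ^ K * (n : ℝ) ^ 3) := by ring
    refine le_trans hmono ?_
    -- step 5 : final numeric estimate
    have hsqrt1 : 1 ≤ Nat.sqrt n := Nat.le_sqrt.mpr (by omega)
    have hsqrt0 : (0 : ℝ) < (Nat.sqrt n : ℝ) := by exact_mod_cast hsqrt1
    have hs0 : (0 : ℝ) < (s8 n : ℝ) := by exact_mod_cast hs1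
    have hT2 : (T : ℝ) ^ 2 + 1 ≤ 257 * (Nat.sqrt n : ℝ) * n := by
      have hnat : T ^ 2 + 1 ≤ 257 * Nat.sqrt n * n := by
        have h1 : T ^ 2 = 256 * (s8 n) ^ 4 * (Nat.log 2 n + 1) ^ 2 := by rw [hTdef]; ring
        have h2 : (s8 n) ^ 4 ≤ Nat.sqrt n := s8_pow4_le
        have h3 : (Nat.log 2 n + 1) ^ 2 ≤ n := log_sq_le hn
        have h4 : T ^ 2 ≤ 256 * Nat.sqrt n * n := by
          rw [h1]
          exact Nat.mul_le_mul (Nat.mul_le_mul_left _ h2) h3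
        have h5 : 1 ≤ Nat.sqrt n * n := Nat.mul_pos hsqrt1 (by omega)
        calc T ^ 2 + 1 ≤ 256 * Nat.sqrt n * n + 1 := by omega
          _ ≤ 256 * Nat.sqrt n * n + Nat.sqrt n * n := Nat.add_le_add_left h5 _
          _ = 257 * Nat.sqrt n * n := by ring
      exact_mod_cast hnat
    have hKn : (K : ℝ) ≤ n := by
      have : K ≤ n := by omega
      exact_mod_cast this
    have hsq_le : (Nat.sqrt n : ℝ) * (Nat.sqrt n : ℝ) ≤ (n : ℝ) := by
      have := Nat.sqrt_le' n
      have h2 : (Nat.sqrt n) ^ 2 ≤ n := this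
      exact_mod_cast (by nlinarith [h2] : Nat.sqrt n * Nat.sqrt n ≤ n)
    have hpart1 : ((T : ℝ) ^ 2 + 1) * K / (n : ℝ) ^ 3 ≤ 257 / (Nat.sqrt n : ℝ) := by
      rw [div_le_div_iff₀ (by positivity) hsqrt0]
      have hKpos : (0 : ℝ) ≤ (K : ℝ) := by positivity
      calc ((T : ℝ) ^ 2 + 1) * K * (Nat.sqrt n : ℝ)
          ≤ (257 * (Nat.sqrt n : ℝ) * n) * (n : ℝ) * (Nat.sqrt n : ℝ) := by
            apply mul_le_mul_of_nonneg_right _ (le_of_lt hsqrt0)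
            apply mul_le_mul hT2 hKn hKpos (by positivity)
        _ = 257 * ((Nat.sqrt n : ℝ) * (Nat.sqrt n : ℝ)) * (n : ℝ) ^ 2 := by ring
        _ ≤ 257 * (n : ℝ) * (n : ℝ) ^ 2 := by
            apply mul_le_mul_of_nonneg_right _ (by positivity)
            apply mul_le_mul_of_nonneg_left hsq_le (by norm_num)
        _ = 257 * (n : ℝ) ^ 3 := by ring
    have hpart2 : ((n / s8 n : ℕ) : ℝ) * (n : ℝ) ^ 2 / (n : ℝ) ^ 3 ≤ 1 / (s8 n : ℝ) := by
      have hcast : ((n / s8 n : ℕ) : ℝ) ≤ (n : ℝ) / (s8 n : ℝ) := Nat.cast_div_le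
      rw [div_le_div_iff₀ (by positivity) hs0]
      calc ((n / s8 n : ℕ) : ℝ) * (n : ℝ) ^ 2 * (s8 n : ℝ)
          ≤ ((n : ℝ) / (s8 n : ℝ)) * (n : ℝ) ^ 2 * (s8 n : ℝ) := by
            apply mul_le_mul_of_nonneg_right _ (le_of_lt hs0)
            apply mul_le_mul_of_nonneg_right hcast (by positivity)
        _ = (n : ℝ) ^ 3 := by field_simp
        _ = 1 * (n : ℝ) ^ 3 := by ring
    calc (((T : ℝ) ^ 2 + 1) * K + ((n / s8 n : ℕ) : ℝ) * (n : ℝ) ^ 2) / (n : ℝ) ^ 3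
        = ((T : ℝ) ^ 2 + 1) * K / (n : ℝ) ^ 3
          + ((n / s8 n : ℕ) : ℝ) * (n : ℝ) ^ 2 / (n : ℝ) ^ 3 := by rw [add_div]
      _ ≤ 257 / (Nat.sqrt n : ℝ) + 1 / (s8 n : ℝ) := add_le_add hpart1 hpart2

end Parking
end
end

section
/- For every real t ≥ 0, the following three identities hold, all series converging: Σ_{k=1}^{∞} k · q(k,t) = 1 (conservation of mass), Σ_{k=1}^{∞} q(k,t) = e^{−t} (total concentration), and Σ_{k=1}^{∞} k² · q(k,t) = e^{2t} (second moment). -/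
open scoped BigOperators
open Classical Filter Topology

noncomputable section

namespace Parking

/-- `D m q = Σ_{k=0}^m (-1)^{m+k} C(m,k) k^q` (with `0^0 = 1`). -/
def D (m q : ℕ) : ℤ := ∑ k ∈ Finset.range (m+1), (-1:ℤ)^(m+k) * (m.choose k) * (k:ℤ)^q

lemma Drec (m q : ℕ) :
    D (m+1) (q+1) = (m+1) * ∑ r ∈ Finset.range (q+1), (q.choose r : ℤ) * D m r := by
  have h2 : ∀ k, (((m+1).choose (k+1) : ℤ) * ((k:ℤ)+1)) = ((m:ℤ)+1) * (m.choose k : ℤ) := by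
    intro k
    have h : ((m+1) * m.choose k : ℕ) = ((m+1).choose (k+1) * (k+1) : ℕ) :=
      Nat.add_one_mul_choose_eq m k
    exact_mod_cast h.symm
  have h3 : ∀ k : ℕ, ((k:ℤ)+1)^q = ∑ r ∈ Finset.range (q+1), (k:ℤ)^r * (q.choose r : ℤ) := by
    intro k
    simpa using add_pow (k:ℤ) 1 q
  calc D (m+1) (q+1)
      = ∑ k ∈ Finset.range (m+1), (-1:ℤ)^(m+k) * (((m+1).choose (k+1) : ℤ) * ((k:ℤ)+1)) * ((k:ℤ)+1)^q := by
        rw [D, Finset.sum_range_succ']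
        simp only [Nat.cast_zero, zero_pow (Nat.succ_ne_zero q), mul_zero, add_zero]
        exact Finset.sum_congr rfl fun k _ => by push_cast; ring
    _ = ∑ k ∈ Finset.range (m+1), ∑ r ∈ Finset.range (q+1),
          (-1:ℤ)^(m+k) * (((m:ℤ)+1) * (m.choose k : ℤ)) * ((k:ℤ)^r * (q.choose r : ℤ)) := by
        refine Finset.sum_congr rfl fun k _ => ?_
        rw [h2, h3, Finset.mul_sum]
    _ = ∑ r ∈ Finset.range (q+1), ∑ k ∈ Finset.range (m+1),
          (-1:ℤ)^(m+k) * (((m:ℤ)+1) * (m.choose k : ℤ)) * ((k:ℤ)^r * (q.choose r : ℤ)) :=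
        Finset.sum_comm
    _ = ((m:ℤ)+1) * ∑ r ∈ Finset.range (q+1), (q.choose r : ℤ) * D m r := by
        rw [Finset.mul_sum]
        refine Finset.sum_congr rfl fun r _ => ?_
        rw [D, Finset.mul_sum, Finset.mul_sum]
        exact Finset.sum_congr rfl fun k _ => by ring

lemma D_eq_zero : ∀ m q : ℕ, q < m → D m q = 0 := by
  intro m
  induction m with
  | zero => omega
  | succ m ih =>
    intro q hq
    match q with
    | 0 =>
      have h := Int.alternating_sum_range_choose (n := m + 1)
      rw [if_neg (by omega)] at h
      have : D (m+1) 0 = (-1:ℤ)^(m+1) * ∑ k ∈ Finset.range (m+2), (-1:ℤ)^k * ((m+1).choose k) := by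
        rw [D, Finset.mul_sum]
        exact Finset.sum_congr rfl fun k _ => by ring
      rw [this, h, mul_zero]
    | q + 1 =>
      rw [Drec]
      have : ∀ r ∈ Finset.range (q+1), (q.choose r : ℤ) * D m r = 0 := fun r hr => by
        rw [ih r (by simp at hr; omega), mul_zero]
      rw [Finset.sum_congr rfl this, Finset.sum_const_zero, mul_zero]

lemma D_diag : ∀ m : ℕ, D m m = m.factorial := by
  intro m
  induction m with
  | zero => simp [D]
  | succ m ih =>
    rw [Drec, Finset.sum_range_succ]
    have : ∀ r ∈ Finset.range m, (m.choose r : ℤ) * D m r = 0 := fun r hr => by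
      rw [D_eq_zero m r (by simpa using hr), mul_zero]
    rw [Finset.sum_congr rfl this, Finset.sum_const_zero, zero_add, Nat.choose_self, ih,
      Nat.factorial_succ]
    push_cast; ring

lemma D_superdiag : ∀ m : ℕ, 2 * D m (m+1) = m.factorial * m * (m+1) := by
  intro m
  induction m with
  | zero => simp [D]
  | succ m ih =>
    rw [Drec, Finset.sum_range_succ, Finset.sum_range_succ]
    have : ∀ r ∈ Finset.range m, ((m+1).choose r : ℤ) * D m r = 0 := fun r hr => by
      rw [D_eq_zero m r (by simpa using hr), mul_zero]
    rw [Finset.sum_congr rfl this, Finset.sum_const_zero, zero_add, Nat.choose_self,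
      Nat.choose_succ_self_right, D_diag]
    have h2 : (2:ℤ) * D m (m+1) = m.factorial * m * (m+1) := ih
    rw [Nat.factorial_succ]
    push_cast
    linear_combination ((m:ℤ)+1) * h2


def cterm (p i : ℕ) (z : ℂ) : ℂ :=
  ((i:ℂ)+1)^(i+p) / ((i+1).factorial : ℂ) * z^i * Complex.exp (-((i:ℂ)+1) * z)

def g (p : ℕ) (z : ℂ) : ℂ := ∑' i, cterm p i z

def aterm (p i j : ℕ) (z : ℂ) : ℂ :=
  ((i:ℂ)+1)^(i+p) / ((i+1).factorial : ℂ) * z^i * ((-((i:ℂ)+1) * z)^j / (j.factorial : ℂ))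

lemma cexp_hasSum (w : ℂ) : HasSum (fun j => w^j / (j.factorial : ℂ)) (Complex.exp w) := by
  rw [Complex.exp_eq_exp_ℂ]; exact NormedSpace.expSeries_div_hasSum_exp w

lemma rexp_hasSum (x : ℝ) : HasSum (fun j => x^j / (j.factorial : ℝ)) (Real.exp x) := by
  rw [Real.exp_eq_exp_ℝ]; exact NormedSpace.expSeries_div_hasSum_exp x

lemma aterm_hasSum (p i : ℕ) (z : ℂ) :
    HasSum (fun j => aterm p i j z) (cterm p i z) :=
  (cexp_hasSum (-((i:ℂ)+1) * z)).mul_left _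

lemma norm_base (i : ℕ) : ‖(i:ℂ)+1‖ = (i:ℝ)+1 := by
  have h : ((i:ℂ)+1) = ((i+1:ℕ):ℂ) := by push_cast; ring
  rw [h, Complex.norm_natCast]; push_cast; ring

lemma norm_aterm (p i j : ℕ) (z : ℂ) :
    ‖aterm p i j z‖ = ((i:ℝ)+1)^(i+p) / ((i+1).factorial : ℝ) * ‖z‖^i *
      ((((i:ℝ)+1) * ‖z‖)^j / (j.factorial : ℝ)) := by
  simp only [aterm, norm_mul, norm_div, norm_pow, norm_neg, norm_base,
    Complex.norm_natCast, mul_pow]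

lemma norm_cterm (p i : ℕ) (z : ℂ) :
    ‖cterm p i z‖ = ((i:ℝ)+1)^(i+p) / ((i+1).factorial : ℝ) * ‖z‖^i *
      Real.exp (((i:ℝ)+1) * (-z.re)) := by
  have h3 : ‖Complex.exp (-((i:ℂ)+1) * z)‖ = Real.exp (((i:ℝ)+1) * (-z.re)) := by
    rw [Complex.norm_exp]
    congr 1
    simp [Complex.mul_re, Complex.add_re, Complex.neg_re, Complex.ofReal_re]
    ring
  simp only [cterm, norm_mul, norm_div, norm_pow, norm_base, h3, Complex.norm_natCast]

lemma pow_div_factorial_le (n : ℕ) (x : ℝ) (hx : 0 ≤ x) :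
    x^n / (n.factorial : ℝ) ≤ Real.exp x := by
  refine le_trans ?_ (Real.sum_le_exp_of_nonneg hx (n+1))
  exact Finset.single_le_sum (f := fun i => x^i / (i.factorial : ℝ)) (fun i _ => by positivity)
    (Finset.self_mem_range_succ n)

lemma base_bound {p : ℕ} (hp : p ≤ 2) (i : ℕ) (x y : ℝ) (hx : 0 ≤ x) :
    ((i:ℝ)+1)^(i+p) / ((i+1).factorial : ℝ) * x^i * Real.exp (((i:ℝ)+1) * y) ≤
      ((i:ℝ)+1) * Real.exp (1+y) * (Real.exp (1+y) * x)^i := by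
  have hone : (1:ℝ) ≤ (i:ℝ)+1 := by linarith [Nat.cast_nonneg (α := ℝ) i]
  have key : ((i:ℝ)+1)^(i+p) / ((i+1).factorial : ℝ) ≤ ((i:ℝ)+1) * Real.exp ((i:ℝ)+1) := by
    have h1 : ((i:ℝ)+1)^(i+p) ≤ ((i:ℝ)+1)^(i+1) * ((i:ℝ)+1) := by
      rw [← pow_succ]
      exact pow_le_pow_right₀ hone (by omega)
    have h3 : ((i:ℝ)+1)^(i+1) / ((i+1).factorial : ℝ) ≤ Real.exp ((i:ℝ)+1) := by
      have := pow_div_factorial_le (i+1) ((i:ℝ)+1) (by positivity)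
      push_cast at this ⊢
      convert this using 2
    calc ((i:ℝ)+1)^(i+p) / ((i+1).factorial : ℝ)
        ≤ (((i:ℝ)+1)^(i+1) * ((i:ℝ)+1)) / ((i+1).factorial : ℝ) := by gcongr
      _ = (((i:ℝ)+1)^(i+1) / ((i+1).factorial : ℝ)) * ((i:ℝ)+1) := by ring
      _ ≤ Real.exp ((i:ℝ)+1) * ((i:ℝ)+1) := by gcongr
      _ = ((i:ℝ)+1) * Real.exp ((i:ℝ)+1) := mul_comm _ _
  have hxy : Real.exp ((i:ℝ)+1) * Real.exp (((i:ℝ)+1)*y) = Real.exp (1+y) * Real.exp (1+y)^i := by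
    have h : ((i:ℝ)+1) + ((i:ℝ)+1)*y = ((i+1:ℕ):ℝ) * (1+y) := by push_cast; ring
    rw [← Real.exp_add, h, Real.exp_nat_mul, pow_succ']
  calc ((i:ℝ)+1)^(i+p) / ((i+1).factorial : ℝ) * x^i * Real.exp (((i:ℝ)+1) * y)
      ≤ (((i:ℝ)+1) * Real.exp ((i:ℝ)+1)) * x^i * Real.exp (((i:ℝ)+1) * y) := by
        gcongr
      _ = ((i:ℝ)+1) * Real.exp (1+y) * (Real.exp (1+y) * x)^i := by
        rw [mul_pow]
        linear_combination ((i:ℝ)+1) * x^i * hxy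

lemma summable_rhs (c : ℝ) {r : ℝ} (hr0 : 0 ≤ r) (hr : r < 1) :
    Summable (fun i : ℕ => ((i:ℝ)+1) * c * r^i) := by
  have h : ‖r‖ < 1 := by rwa [Real.norm_eq_abs, abs_of_nonneg hr0]
  have h1 := summable_pow_mul_geometric_of_norm_lt_one (R := ℝ) 1 h
  have h2 := summable_geometric_of_norm_lt_one h
  have := (h1.add h2).mul_right c
  exact this.congr fun i => by ring


def U : Set ℂ := {z | z.re < 1 ∧ Real.exp (1 + -z.re) * ‖z‖ < 1}

lemma summable_cterm {p : ℕ} (hp : p ≤ 2) {z : ℂ} (hz : Real.exp (1 + -z.re) * ‖z‖ < 1) :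
    Summable (fun i => cterm p i z) := by
  have hb := summable_rhs (Real.exp (1 + -z.re)) (r := Real.exp (1 + -z.re) * ‖z‖)
    (by positivity) hz
  exact Summable.of_norm (Summable.of_nonneg_of_le (fun i => norm_nonneg _)
    (fun i => by rw [norm_cterm]; exact base_bound hp i ‖z‖ (-z.re) (norm_nonneg z)) hb)

lemma small_lt (z : ℂ) (hz : ‖z‖ ≤ 1/8) : Real.exp (1 + ‖z‖) * ‖z‖ < 1 := by
  have e2 : Real.exp (1+‖z‖) ≤ Real.exp 2 := Real.exp_le_exp.mpr (by linarith)
  have h8 : Real.exp 2 < 8 := by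
    rw [show (2:ℝ) = 1+1 by norm_num, Real.exp_add]
    nlinarith [Real.exp_one_lt_d9, Real.exp_pos 1]
  nlinarith [norm_nonneg z, Real.exp_pos (1+‖z‖)]

lemma small_mem_U {z : ℂ} (hz : ‖z‖ ≤ 1/8) : z ∈ U := by
  have hre : |z.re| ≤ ‖z‖ := Complex.abs_re_le_norm z
  have h1 : -z.re ≤ ‖z‖ := by cases abs_le.mp hre; linarith
  have e2 : Real.exp (1 + -z.re) ≤ Real.exp (1+‖z‖) := Real.exp_le_exp.mpr (by linarith)
  have hsl := small_lt z hz
  show z.re < 1 ∧ Real.exp (1 + -z.re) * ‖z‖ < 1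
  have h0 : (0:ℝ) ≤ ‖z‖ := norm_nonneg z
  refine ⟨by linarith [(abs_le.mp hre).2], ?_⟩
  nlinarith [Real.exp_pos (1 + -z.re)]

lemma summable_norm_aterm {p : ℕ} (hp : p ≤ 2) {z : ℂ} (hz : ‖z‖ ≤ 1/8) :
    Summable (fun ij : ℕ × ℕ => ‖aterm p ij.1 ij.2 z‖) := by
  rw [summable_prod_of_nonneg (fun ij => norm_nonneg _)]
  constructor
  · intro i
    have := (Real.summable_pow_div_factorial (((i:ℝ)+1) * ‖z‖)).mul_left
      (((i:ℝ)+1)^(i+p) / ((i+1).factorial : ℝ) * ‖z‖^i)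
    exact this.congr fun j => by rw [norm_aterm]
  · have hrow : ∀ i, (∑' j, ‖aterm p i j z‖)
        = ((i:ℝ)+1)^(i+p) / ((i+1).factorial : ℝ) * ‖z‖^i * Real.exp (((i:ℝ)+1) * ‖z‖) := by
      intro i
      have h := (rexp_hasSum (((i:ℝ)+1) * ‖z‖)).mul_left
        (((i:ℝ)+1)^(i+p) / ((i+1).factorial : ℝ) * ‖z‖^i)
      rw [show (∑' j, ‖aterm p i j z‖) = ∑' j,
        ((i:ℝ)+1)^(i+p) / ((i+1).factorial : ℝ) * ‖z‖^i * ((((i:ℝ)+1) * ‖z‖)^j / (j.factorial : ℝ))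
        from tsum_congr fun j => norm_aterm p i j z]
      exact h.tsum_eq
    refine Summable.of_nonneg_of_le (fun i => tsum_nonneg (fun j => norm_nonneg _)) (fun i => ?_)
      (summable_rhs (Real.exp (1+‖z‖)) (by positivity) (small_lt z hz))
    rw [hrow]
    exact base_bound hp i ‖z‖ ‖z‖ (norm_nonneg z)

lemma g_eq_antidiagonal {p : ℕ} (hp : p ≤ 2) {z : ℂ} (hz : ‖z‖ ≤ 1/8) :
    g p z = ∑' n, ∑ ij ∈ Finset.HasAntidiagonal.antidiagonal n, aterm p ij.1 ij.2 z := by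
  have hprod : Summable (fun ij : ℕ × ℕ => aterm p ij.1 ij.2 z) :=
    Summable.of_norm (summable_norm_aterm hp hz)
  have h1 : g p z = ∑' ij : ℕ × ℕ, aterm p ij.1 ij.2 z := by
    rw [Summable.tsum_prod' hprod (fun i => (aterm_hasSum p i z).summable)]
    exact (tsum_congr fun i => (aterm_hasSum p i z).tsum_eq).symm
  rw [h1]
  set f : ℕ × ℕ → ℂ := fun ij => aterm p ij.1 ij.2 z with hf
  set e := Finset.HasAntidiagonal.sigmaAntidiagonalEquivProd (A := ℕ) with he
  have hs : Summable (f ∘ e) := (Equiv.summable_iff e).mpr hprod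
  calc ∑' ij : ℕ × ℕ, f ij
      = ∑' c : Σ n : ℕ, {x // x ∈ Finset.HasAntidiagonal.antidiagonal n}, (f ∘ e) c := (e.tsum_eq f).symm
    _ = ∑' n, ∑' c : {x // x ∈ Finset.HasAntidiagonal.antidiagonal n}, (f ∘ e) ⟨n, c⟩ := Summable.tsum_sigma hs
    _ = ∑' n, ∑ ij ∈ Finset.HasAntidiagonal.antidiagonal n, f ij :=
        tsum_congr fun n => (tsum_congr fun c => rfl).trans (Finset.tsum_subtype _ f)

lemma antidiagonal_aterm (p n : ℕ) (z : ℂ) :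
    ∑ ij ∈ Finset.HasAntidiagonal.antidiagonal n, aterm p ij.1 ij.2 z
      = (∑ k ∈ Finset.range (n+1),
          (-1:ℂ)^(n+k) * ((k:ℂ)+1)^(n+p) / (((k+1).factorial : ℂ) * ((n-k).factorial : ℂ))) * z^n := by
  rw [Finset.Nat.sum_antidiagonal_eq_sum_range_succ_mk, Finset.sum_mul]
  refine Finset.sum_congr rfl fun k hk => ?_
  have hk' : k ≤ n := Nat.lt_succ_iff.mp (Finset.mem_range.mp hk)
  have hsgn : ((-1:ℂ))^(n-k) = (-1:ℂ)^(n+k) := by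
    have h : n + k = (n-k) + 2*k := by omega
    rw [h, pow_add, pow_mul]; norm_num
  have hpow1 : ((k:ℂ)+1)^(k+p) * ((k:ℂ)+1)^(n-k) = ((k:ℂ)+1)^(n+p) := by
    rw [← pow_add]; congr 1; omega
  have hpow2 : (z:ℂ)^k * z^(n-k) = z^n := by rw [← pow_add]; congr 1; omega
  have e1 : (-((k:ℂ)+1) * z)^(n-k) = (-1:ℂ)^(n-k) * ((k:ℂ)+1)^(n-k) * z^(n-k) := by
    rw [show -((k:ℂ)+1) * z = (-1) * (((k:ℂ)+1) * z) by ring, mul_pow, mul_pow]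
    ring
  calc aterm p k (n-k) z
      = ((k:ℂ)+1)^(k+p) / ((k+1).factorial : ℂ) * z^k *
          (((-1:ℂ)^(n-k) * ((k:ℂ)+1)^(n-k) * z^(n-k)) / ((n-k).factorial : ℂ)) := by
        unfold aterm; rw [e1]
    _ = (-1:ℂ)^(n-k) * (((k:ℂ)+1)^(k+p) * ((k:ℂ)+1)^(n-k)) * (z^k * z^(n-k)) /
          (((k+1).factorial : ℂ) * ((n-k).factorial : ℂ)) := by ring
    _ = (-1:ℂ)^(n+k) * ((k:ℂ)+1)^(n+p) * z^n /
          (((k+1).factorial : ℂ) * ((n-k).factorial : ℂ)) := by rw [hsgn, hpow1, hpow2]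
    _ = (-1:ℂ)^(n+k) * ((k:ℂ)+1)^(n+p) / (((k+1).factorial : ℂ) * ((n-k).factorial : ℂ)) * z^n := by
        ring

lemma sum_coeff_eq (n p : ℕ) (h : 1 ≤ n + p) :
    ∑ k ∈ Finset.range (n+1),
        (-1:ℂ)^(n+k) * ((k:ℂ)+1)^(n+p) / (((k+1).factorial : ℂ) * ((n-k).factorial : ℂ))
      = ((D (n+1) (n+p) : ℤ) : ℂ) / ((n+1).factorial : ℂ) := by
  have hD : ((D (n+1) (n+p) : ℤ) : ℂ)
      = ∑ k ∈ Finset.range (n+1), (-1:ℂ)^(n+k) * (((n+1).choose (k+1) : ℕ) : ℂ) * ((k:ℂ)+1)^(n+p) := by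
    rw [D, Finset.sum_range_succ']
    push_cast
    rw [zero_pow (by omega : n + p ≠ 0)]
    rw [mul_zero, add_zero]
    exact Finset.sum_congr rfl fun k _ => by ring
  rw [hD, Finset.sum_div]
  refine Finset.sum_congr rfl fun k hk => ?_
  have hk' : k ≤ n := Nat.lt_succ_iff.mp (Finset.mem_range.mp hk)
  have hfac : ((n+1).choose (k+1) * ((k+1).factorial * (n-k).factorial) : ℕ) = (n+1).factorial := by
    have h2 := Nat.choose_mul_factorial_mul_factorial (Nat.succ_le_succ hk')
    rw [Nat.succ_sub_succ] at h2
    rw [← mul_assoc]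
    exact h2
  have h1 : ((k+1).factorial : ℂ) ≠ 0 := Nat.cast_ne_zero.mpr (Nat.factorial_ne_zero _)
  have h2 : ((n-k).factorial : ℂ) ≠ 0 := Nat.cast_ne_zero.mpr (Nat.factorial_ne_zero _)
  have h3 : ((n+1).factorial : ℂ) ≠ 0 := Nat.cast_ne_zero.mpr (Nat.factorial_ne_zero _)
  have hc := congrArg (Nat.cast : ℕ → ℂ) hfac
  push_cast at hc
  field_simp
  linear_combination (-1:ℂ) * hc

lemma g0_small {z : ℂ} (hz : ‖z‖ ≤ 1/8) : g 0 z = 1 := by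
  rw [g_eq_antidiagonal (by norm_num) hz]
  have hcoeff : ∀ n, ∑ ij ∈ Finset.HasAntidiagonal.antidiagonal n, aterm 0 ij.1 ij.2 z
      = if n = 0 then (1:ℂ) else 0 := by
    intro n
    match n with
    | 0 => simp [Finset.Nat.antidiagonal_zero, aterm]
    | n + 1 =>
      rw [antidiagonal_aterm, sum_coeff_eq (n+1) 0 (by omega),
        D_eq_zero (n+1+1) (n+1+0) (by omega)]
      simp
  rw [tsum_congr hcoeff]
  exact tsum_ite_eq 0 1

lemma g1_small {z : ℂ} (hz : ‖z‖ ≤ 1/8) : g 1 z = (1 - z)⁻¹ := by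
  rw [g_eq_antidiagonal (by norm_num) hz]
  have hz1 : ‖z‖ < 1 := by linarith [norm_nonneg z]
  have hcoeff : ∀ n, ∑ ij ∈ Finset.HasAntidiagonal.antidiagonal n, aterm 1 ij.1 ij.2 z = z^n := by
    intro n
    rw [antidiagonal_aterm, sum_coeff_eq n 1 (by omega), D_diag (n+1)]
    have h3 : (((n+1).factorial : ℕ) : ℂ) ≠ 0 := Nat.cast_ne_zero.mpr (Nat.factorial_ne_zero _)
    rw [show ((((n+1).factorial : ℕ) : ℤ) : ℂ) = (((n+1).factorial : ℕ) : ℂ) by push_cast; ring]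
    rw [div_self h3, one_mul]
  rw [tsum_congr hcoeff]
  exact tsum_geometric_of_norm_lt_one hz1

lemma choose_two (n : ℕ) : ((n+2).choose 2 * 2 : ℕ) = (n+2)*(n+1) := by
  have h := Nat.choose_mul_factorial_mul_factorial (show 2 ≤ n+2 by omega)
  have h2 : (n+2) - 2 = n := by omega
  rw [h2] at h
  have h3 : (n+2).factorial = ((n+2)*(n+1))*n.factorial := by
    rw [Nat.factorial_succ, Nat.factorial_succ]; ring
  have h4 : (Nat.factorial 2) = 2 := rfl
  rw [h3, h4] at h
  have hpos := Nat.factorial_pos n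
  refine Nat.eq_of_mul_eq_mul_right hpos ?_
  calc (n+2).choose 2 * 2 * n.factorial
      = (n+2).choose 2 * 2 * n.factorial := rfl
    _ = ((n+2)*(n+1))*n.factorial := h

lemma g2_small {z : ℂ} (hz : ‖z‖ ≤ 1/8) : g 2 z = 1/(1-z)^3 := by
  rw [g_eq_antidiagonal (by norm_num) hz]
  have hz1 : ‖z‖ < 1 := by linarith [norm_nonneg z]
  have hcoeff : ∀ n, ∑ ij ∈ Finset.HasAntidiagonal.antidiagonal n, aterm 2 ij.1 ij.2 z
      = (((n+2).choose 2 : ℕ) : ℂ) * z^n := by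
    intro n
    rw [antidiagonal_aterm, sum_coeff_eq n 2 (by omega)]
    congr 1
    have hsd := D_superdiag (n+1)
    rw [show n+1+1 = n+2 by omega] at hsd
    have hc := congrArg (fun x : ℤ => (x : ℂ)) hsd
    push_cast at hc
    have hcc := congrArg (fun x : ℕ => (x : ℂ)) (choose_two n)
    push_cast at hcc
    have h3 : (((n+1).factorial : ℕ) : ℂ) ≠ 0 := Nat.cast_ne_zero.mpr (Nat.factorial_ne_zero _)
    field_simp
    linear_combination ((1:ℂ)/2) * hc - ((((n+1).factorial : ℕ) : ℂ)/2) * hcc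
  rw [tsum_congr hcoeff]
  exact tsum_choose_mul_geometric_of_norm_lt_one 2 hz1

lemma isOpen_U : IsOpen U := by
  rw [U, Set.setOf_and]
  exact (isOpen_lt Complex.continuous_re continuous_const).inter
    (isOpen_lt ((Real.continuous_exp.comp (continuous_const.add Complex.continuous_re.neg)).mul
      continuous_norm) continuous_const)

lemma star_U {z : ℂ} (hz : z ∈ U) {τ : ℝ} (h0 : 0 ≤ τ) (h1 : τ ≤ 1) : τ • z ∈ U := by
  obtain ⟨hre, hE⟩ := hz
  have hre' : (τ • z).re = τ * z.re := by
    rw [Complex.real_smul, Complex.mul_re]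
    simp
  have hn : ‖τ • z‖ = τ * ‖z‖ := by
    rw [norm_smul, Real.norm_eq_abs, abs_of_nonneg h0]
  have k1 : τ ≤ Real.exp (τ - 1) := by have := Real.add_one_le_exp (τ-1); linarith
  have k2 : Real.exp (τ-1) ≤ Real.exp (-(1-τ)*z.re) :=
    Real.exp_le_exp.mpr (by nlinarith)
  have k3 : Real.exp (1 + -(τ * z.re)) * τ ≤ Real.exp (1 + -z.re) := by
    calc Real.exp (1 + -(τ * z.re)) * τ
        ≤ Real.exp (1 + -(τ * z.re)) * Real.exp (-(1-τ)*z.re) :=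
          mul_le_mul_of_nonneg_left (k1.trans k2) (Real.exp_pos _).le
      _ = Real.exp (1 + -z.re) := by rw [← Real.exp_add]; congr 1; ring
  constructor
  · rw [hre']
    rcases le_or_gt z.re 0 with h | h
    · nlinarith
    · nlinarith
  · show Real.exp (1 + -(τ • z).re) * ‖τ • z‖ < 1
    rw [hre', hn]
    have h0n : (0:ℝ) ≤ ‖z‖ := norm_nonneg z
    calc Real.exp (1 + -(τ * z.re)) * (τ * ‖z‖)
        = (Real.exp (1 + -(τ * z.re)) * τ) * ‖z‖ := by ring
      _ ≤ Real.exp (1 + -z.re) * ‖z‖ := mul_le_mul_of_nonneg_right k3 h0n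
      _ < 1 := hE

lemma isPreconnected_U : IsPreconnected U := by
  have h0 : (0:ℂ) ∈ U := small_mem_U (by norm_num)
  have hpc : IsPathConnected U := by
    refine ⟨0, h0, ?_⟩
    intro y hy
    apply JoinedIn.ofLine (f := fun t : ℝ => t • y)
    · exact (continuous_id.smul continuous_const).continuousOn
    · simp
    · simp
    · rintro w ⟨t, ht, rfl⟩
      exact star_U hy ht.1 ht.2
  exact hpc.isConnected.isPreconnected

lemma differentiableOn_g {p : ℕ} (hp : p ≤ 2) : DifferentiableOn ℂ (g p) U := by
  intro z0 hz0
  have hc : Real.exp (1 + -z0.re) * ‖z0‖ < 1 := hz0.2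
  have hc0 : 0 ≤ Real.exp (1 + -z0.re) * ‖z0‖ := by positivity
  set c' : ℝ := (Real.exp (1 + -z0.re) * ‖z0‖ + 1)/2 with hc'def
  have hc' : c' < 1 := by rw [hc'def]; linarith
  have hc'0 : 0 ≤ c' := by rw [hc'def]; linarith
  set V := {z : ℂ | Real.exp (1 + -z.re) * ‖z‖ < c' ∧ z0.re - 1 < z.re} with hVdef
  have hV : IsOpen V := by
    rw [hVdef, Set.setOf_and]
    exact (isOpen_lt ((Real.continuous_exp.comp (continuous_const.add
      Complex.continuous_re.neg)).mul continuous_norm) continuous_const).inter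
      (isOpen_lt continuous_const Complex.continuous_re)
  have hz0V : z0 ∈ V := ⟨by rw [hc'def]; linarith, by linarith⟩
  have hdiff : DifferentiableOn ℂ (fun w => ∑' i, cterm p i w) V := by
    refine Complex.differentiableOn_tsum_of_summable_norm
      (u := fun i => ((i:ℝ)+1) * Real.exp (1 + (1 - z0.re)) * c'^i)
      (summable_rhs _ (by positivity) hc') (fun i => ?_) hV (fun i w hw => ?_)
    · have : Differentiable ℂ (fun z => cterm p i z) := by
        unfold cterm
        fun_prop
      exact this.differentiableOn
    · have hb : ‖cterm p i w‖ ≤ ((i:ℝ)+1) * Real.exp (1 + -w.re) *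
          (Real.exp (1 + -w.re) * ‖w‖)^i := by
        rw [norm_cterm]; exact base_bound hp i ‖w‖ (-w.re) (norm_nonneg w)
      have h1 : Real.exp (1 + -w.re) ≤ Real.exp (1 + (1 - z0.re)) :=
        Real.exp_le_exp.mpr (by have : z0.re - 1 < w.re := hw.2; linarith)
      have h2 : (Real.exp (1 + -w.re) * ‖w‖)^i ≤ c'^i :=
        pow_le_pow_left₀ (by positivity) hw.1.le i
      calc ‖cterm p i w‖ ≤ ((i:ℝ)+1) * Real.exp (1 + -w.re) * (Real.exp (1 + -w.re) * ‖w‖)^i := hb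
        _ ≤ ((i:ℝ)+1) * Real.exp (1 + (1 - z0.re)) * c'^i := by
            have hi : (0:ℝ) ≤ (i:ℝ)+1 := by positivity
            exact mul_le_mul (mul_le_mul_of_nonneg_left h1 hi) h2 (by positivity) (by positivity)
  exact (hdiff.differentiableAt (hV.mem_nhds hz0V)).differentiableWithinAt

lemma analyticOnNhd_g {p : ℕ} (hp : p ≤ 2) : AnalyticOnNhd ℂ (g p) U :=
  (differentiableOn_g hp).analyticOnNhd isOpen_U

lemma small_nhds : Metric.closedBall (0:ℂ) (1/8) ∈ 𝓝 (0:ℂ) :=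
  Metric.closedBall_mem_nhds _ (by norm_num)

lemma mem_small {w : ℂ} (hw : w ∈ Metric.closedBall (0:ℂ) (1/8)) : ‖w‖ ≤ 1/8 := by
  rwa [Metric.mem_closedBall, dist_zero_right] at hw

lemma one_sub_ne_zero {z : ℂ} (hz : z ∈ U) : 1 - z ≠ 0 := by
  intro h
  have : z = 1 := by linear_combination -h
  rw [this] at hz
  exact absurd hz.1 (by norm_num)

lemma g0_U {z : ℂ} (hz : z ∈ U) : g 0 z = 1 := by
  refine AnalyticOnNhd.eqOn_of_preconnected_of_eventuallyEq (analyticOnNhd_g (by norm_num))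
    (analyticOnNhd_const) isPreconnected_U (small_mem_U (z := 0) (by norm_num)) ?_ hz
  filter_upwards [small_nhds] with w hw
  exact g0_small (mem_small hw)

lemma g1_U {z : ℂ} (hz : z ∈ U) : g 1 z = (1 - z)⁻¹ := by
  have hd : DifferentiableOn ℂ (fun z : ℂ => (1 - z)⁻¹) U :=
    DifferentiableOn.inv ((differentiableOn_const _).sub differentiableOn_id)
      (fun w hw => one_sub_ne_zero hw)
  refine AnalyticOnNhd.eqOn_of_preconnected_of_eventuallyEq (analyticOnNhd_g (by norm_num))
    (hd.analyticOnNhd isOpen_U) isPreconnected_U (small_mem_U (z := 0) (by norm_num)) ?_ hz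
  filter_upwards [small_nhds] with w hw
  exact g1_small (mem_small hw)

lemma g2_U {z : ℂ} (hz : z ∈ U) : g 2 z = 1/(1 - z)^3 := by
  have hd : DifferentiableOn ℂ (fun z : ℂ => 1/(1 - z)^3) U := by
    simp only [one_div]
    exact DifferentiableOn.inv (((differentiableOn_const _).sub differentiableOn_id).pow 3)
      (fun w hw => pow_ne_zero _ (one_sub_ne_zero hw))
  refine AnalyticOnNhd.eqOn_of_preconnected_of_eventuallyEq (analyticOnNhd_g (by norm_num))
    (hd.analyticOnNhd isOpen_U) isPreconnected_U (small_mem_U (z := 0) (by norm_num)) ?_ hz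
  filter_upwards [small_nhds] with w hw
  exact g2_small (mem_small hw)

def rterm (p i : ℕ) (t : ℝ) : ℝ :=
  ((i:ℝ)+1)^(i+p) / ((i+1).factorial : ℝ) * (1 - Real.exp (-t))^i *
    Real.exp (((i:ℝ)+1) * (-(1 - Real.exp (-t))))

lemma mem_U_exp {t : ℝ} (ht : 0 ≤ t) : ((1 - Real.exp (-t) : ℝ) : ℂ) ∈ U := by
  set μ : ℝ := 1 - Real.exp (-t) with hμ
  have hE0 : 0 < Real.exp (-t) := Real.exp_pos _
  have hE1 : Real.exp (-t) ≤ 1 := by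
    calc Real.exp (-t) ≤ Real.exp 0 := Real.exp_le_exp.mpr (by linarith)
      _ = 1 := Real.exp_zero
  have hμ0 : 0 ≤ μ := by rw [hμ]; linarith
  have hμ1 : μ < 1 := by rw [hμ]; linarith
  show ((μ:ℂ)).re < 1 ∧ Real.exp (1 + -((μ:ℂ)).re) * ‖((μ:ℂ))‖ < 1
  rw [Complex.ofReal_re, Complex.norm_real, Real.norm_eq_abs, abs_of_nonneg hμ0]
  refine ⟨hμ1, ?_⟩
  rcases eq_or_lt_of_le hμ0 with h | h
  · rw [← h, mul_zero]; norm_num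
  · have k1 : μ < Real.exp (μ - 1) := by
      have := Real.add_one_lt_exp (x := μ - 1) (by intro hc; rw [sub_eq_zero] at hc; linarith)
      linarith
    calc Real.exp (1 + -μ) * μ < Real.exp (1 + -μ) * Real.exp (μ - 1) :=
          mul_lt_mul_of_pos_left k1 (Real.exp_pos _)
      _ = 1 := by rw [← Real.exp_add, show 1 + -μ + (μ - 1) = 0 by ring, Real.exp_zero]

lemma cterm_cast (p i : ℕ) (t : ℝ) :
    cterm p i ((1 - Real.exp (-t) : ℝ) : ℂ) = ((rterm p i t : ℝ) : ℂ) := by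
  unfold cterm rterm
  rw [show -((i:ℂ)+1) * ((1 - Real.exp (-t) : ℝ) : ℂ)
      = ((i:ℂ)+1) * (-((1 - Real.exp (-t) : ℝ) : ℂ)) by ring]
  push_cast
  ring

lemma hasSum_rterm {p : ℕ} (hp : p ≤ 2) {t : ℝ} (ht : 0 ≤ t) {v : ℝ}
    (hv : g p ((1 - Real.exp (-t) : ℝ) : ℂ) = ((v : ℝ) : ℂ)) :
    HasSum (fun i => rterm p i t) v := by
  have hmem := mem_U_exp ht
  have hs := (summable_cterm hp hmem.2).hasSum
  rw [show (∑' i, cterm p i ((1 - Real.exp (-t) : ℝ) : ℂ))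
      = g p ((1 - Real.exp (-t) : ℝ) : ℂ) from rfl, hv] at hs
  have := (funext (fun i => cterm_cast p i t) : _) ▸ hs
  exact Complex.hasSum_ofReal.mp this

lemma key (p k : ℕ) (t : ℝ) :
    Real.exp (-t) * rterm p k t = (((k+1:ℕ)):ℝ)^p * q (k+1) t := by
  unfold rterm q
  simp only [Nat.add_sub_cancel]
  rw [show ((k:ℝ)+1) * (-(1 - Real.exp (-t))) = -(((k+1:ℕ):ℝ) * (1 - Real.exp (-t))) by
    push_cast; ring]
  push_cast
  rw [mul_pow]
  ring


/-- moments of the solution of the additive Smoluchowski equation: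
`Σ k q(k,t) = 1`, `Σ q(k,t) = e^{-t}`, `Σ k² q(k,t) = e^{2t}`. -/
theorem q_moments (t : ℝ) (ht : 0 ≤ t) :
    (Summable fun k : ℕ => (((k + 1 : ℕ) : ℝ)) * q (k + 1) t) ∧
    (∑' k : ℕ, (((k + 1 : ℕ) : ℝ)) * q (k + 1) t) = 1 ∧
    (Summable fun k : ℕ => q (k + 1) t) ∧
    (∑' k : ℕ, q (k + 1) t) = Real.exp (-t) ∧
    (Summable fun k : ℕ => (((k + 1 : ℕ) : ℝ)) ^ 2 * q (k + 1) t) ∧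
    (∑' k : ℕ, (((k + 1 : ℕ) : ℝ)) ^ 2 * q (k + 1) t) = Real.exp (2 * t) := by
  have hE0 : (0:ℝ) < Real.exp (-t) := Real.exp_pos _
  have hcast1 : (1 : ℂ) - ((1 - Real.exp (-t) : ℝ) : ℂ) = ((Real.exp (-t) : ℝ) : ℂ) := by
    push_cast; ring
  have hv1 : g 1 ((1 - Real.exp (-t) : ℝ) : ℂ) = (((Real.exp (-t))⁻¹ : ℝ) : ℂ) := by
    rw [g1_U (mem_U_exp ht), hcast1]
    push_cast
    ring
  have hs1 := (hasSum_rterm (by norm_num) ht hv1).mul_left (Real.exp (-t))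
  have hq1 : HasSum (fun k : ℕ => (((k + 1 : ℕ)):ℝ) * q (k + 1) t) 1 := by
    have heq : (fun k : ℕ => Real.exp (-t) * rterm 1 k t)
        = fun k : ℕ => (((k + 1 : ℕ)):ℝ) * q (k + 1) t :=
      funext fun k => by rw [key 1 k t, pow_one]
    rw [heq] at hs1
    rwa [mul_inv_cancel₀ hE0.ne'] at hs1
  have hv0 : g 0 ((1 - Real.exp (-t) : ℝ) : ℂ) = (((1:ℝ)) : ℂ) := by
    rw [g0_U (mem_U_exp ht)]; norm_num
  have hs0 := (hasSum_rterm (by norm_num) ht hv0).mul_left (Real.exp (-t))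
  have hq0 : HasSum (fun k : ℕ => q (k + 1) t) (Real.exp (-t)) := by
    have heq : (fun k : ℕ => Real.exp (-t) * rterm 0 k t)
        = fun k : ℕ => q (k + 1) t :=
      funext fun k => by rw [key 0 k t, pow_zero, one_mul]
    rw [heq] at hs0
    rwa [mul_one] at hs0
  have hv2 : g 2 ((1 - Real.exp (-t) : ℝ) : ℂ) = (((1/(Real.exp (-t))^3 : ℝ)) : ℂ) := by
    rw [g2_U (mem_U_exp ht), hcast1]
    push_cast
    ring
  have hs2 := (hasSum_rterm (by norm_num) ht hv2).mul_left (Real.exp (-t))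
  have hval2 : Real.exp (-t) * (1/(Real.exp (-t))^3) = Real.exp (2*t) := by
    have h2 : Real.exp (2*t) = Real.exp t * Real.exp t := by
      rw [← Real.exp_add]; congr 1; ring
    rw [Real.exp_neg, h2]
    have := Real.exp_ne_zero t
    field_simp
  have hq2 : HasSum (fun k : ℕ => (((k + 1 : ℕ)):ℝ)^2 * q (k + 1) t) (Real.exp (2*t)) := by
    have heq : (fun k : ℕ => Real.exp (-t) * rterm 2 k t)
        = fun k : ℕ => (((k + 1 : ℕ)):ℝ)^2 * q (k + 1) t :=
      funext fun k => key 2 k t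
    rw [heq, hval2] at hs2
    exact hs2
  exact ⟨hq1.summable, hq1.tsum_eq, hq0.summable, hq0.tsum_eq, hq2.summable, hq2.tsum_eq⟩

end Parking
end
end

section
/- For every integer p ≥ 2 there exists a constant A_p > 0 such that for all t ≥ 0, Σ_{k=1}^{∞} k^p · q(k,t) ≤ A_p · e^{2(p−1)t}, the series being convergent. -/
open scoped BigOperators
open Classical Filter Topology

noncomputable section

namespace Parking

lemma factorial_lower {n : ℕ} (hn : 1 ≤ n) :
    Real.sqrt n * ((n : ℝ) / Real.exp 1) ^ n ≤ (n.factorial : ℝ) := by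
  obtain ⟨k, rfl⟩ : ∃ k, n = k + 1 := ⟨n - 1, by omega⟩
  have h1 : Real.sqrt Real.pi ≤ Stirling.stirlingSeq (k + 1) :=
    Stirling.stirlingSeq'_antitone.le_of_tendsto
      (Stirling.tendsto_stirlingSeq_sqrt_pi.comp (tendsto_add_atTop_nat 1)) k
  have h2 : (1 : ℝ) ≤ Real.sqrt Real.pi := by
    rw [show (1:ℝ) = Real.sqrt 1 by simp]
    exact Real.sqrt_le_sqrt (by linarith [Real.pi_gt_three])
  rw [Stirling.stirlingSeq] at h1
  have hD : 0 < Real.sqrt (2 * ((k + 1 : ℕ) : ℝ)) * (((k + 1 : ℕ) : ℝ) / Real.exp 1) ^ (k + 1) := by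
    have h : (0:ℝ) < ((k+1:ℕ):ℝ) := by positivity
    positivity
  have h3 := (one_le_div hD).mp (h2.trans h1)
  calc Real.sqrt ((k+1:ℕ)) * (((k+1:ℕ):ℝ) / Real.exp 1) ^ (k+1)
      ≤ Real.sqrt (2 * ((k + 1 : ℕ) : ℝ)) * (((k + 1 : ℕ) : ℝ) / Real.exp 1) ^ (k + 1) := by
        apply mul_le_mul_of_nonneg_right (Real.sqrt_le_sqrt (by push_cast; linarith)) (by positivity)
    _ ≤ _ := h3

lemma pow_mul_exp_le (m : ℕ) {c K : ℝ} (hc : 0 < c) (hK : 0 ≤ K) :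
    K ^ m * Real.exp (-(K * c)) ≤ ((m : ℝ) / c) ^ m := by
  rcases Nat.eq_zero_or_pos m with rfl | hm
  · simpa using Real.exp_le_one_iff.mpr (by nlinarith : -(K*c) ≤ 0)
  · have hm' : (0:ℝ) < m := by exact_mod_cast hm
    have h1 : K * c / m ≤ Real.exp (K * c / m) := by
      have h := Real.add_one_le_exp (K * c / m - 1)
      have h2 : Real.exp (K * c / m - 1) ≤ Real.exp (K * c / m) := by
        apply Real.exp_le_exp.mpr; linarith
      linarith
    have h3 : (K*c/m)^m ≤ Real.exp (K*c/m) ^ m := pow_le_pow_left₀ (by positivity) h1 m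
    rw [← Real.exp_nat_mul] at h3
    have he : (m:ℝ) * (K*c/m) = K*c := by field_simp
    rw [he, div_pow] at h3
    have h4 : (K*c)^m ≤ Real.exp (K*c) * (m:ℝ)^m := (div_le_iff₀ (by positivity)).mp h3
    rw [div_pow, le_div_iff₀ (pow_pos hc m)]
    calc K ^ m * Real.exp (-(K * c)) * c ^ m
        = (K*c)^m * Real.exp (-(K*c)) := by rw [mul_pow]; ring
      _ ≤ Real.exp (K*c) * (m:ℝ)^m * Real.exp (-(K*c)) :=
          mul_le_mul_of_nonneg_right h4 (Real.exp_nonneg _)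
      _ = (m:ℝ)^m := by rw [mul_comm (Real.exp (K*c)), mul_assoc, ← Real.exp_add]; simp


set_option maxHeartbeats 2000000 in
/-- for every `p ≥ 2` there is `A_p > 0` with
`Σ_k k^p q(k,t) ≤ A_p e^{2(p-1)t}` for all `t ≥ 0`. -/
theorem q_moment_bound (p : ℕ) (hp : 2 ≤ p) :
    ∃ A : ℝ, 0 < A ∧ ∀ t : ℝ, 0 ≤ t →
      Summable (fun k : ℕ => (((k + 1 : ℕ) : ℝ)) ^ p * q (k + 1) t) ∧
      (∑' k : ℕ, (((k + 1 : ℕ) : ℝ)) ^ p * q (k + 1) t)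
        ≤ A * Real.exp (2 * ((p : ℝ) - 1) * t) := by
  obtain ⟨m, rfl⟩ : ∃ m, p = m + 2 := ⟨p - 2, by omega⟩
  refine ⟨16 * (4 * ((m:ℝ) + 2)) ^ (m + 2), by positivity, fun t ht => ?_⟩
  set s : ℝ := Real.exp (-t) with hs_def
  have hs0 : 0 < s := Real.exp_pos _
  have hs1 : s ≤ 1 := Real.exp_le_one_iff.mpr (by linarith)
  set u : ℝ := s ^ 2 / 2 with hu_def
  have hu0 : 0 < u := by positivity
  have huh : u ≤ 1/2 := by nlinarith
  set α : ℝ := Real.sqrt u with hα_def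
  have hα0 : 0 < α := Real.sqrt_pos.mpr hu0
  have hαs : α ≤ s := by
    calc α ≤ Real.sqrt (s^2) := Real.sqrt_le_sqrt (by nlinarith)
      _ = s := Real.sqrt_sq hs0.le
  have hsα : s ≤ 2 * α := by
    have h1 : Real.sqrt ((s/2)^2) ≤ α := Real.sqrt_le_sqrt (by nlinarith)
    rw [Real.sqrt_sq (by positivity)] at h1
    linarith
  have ha0 : (0:ℝ) ≤ 1 - s := by linarith
  set ρ : ℝ := (1 - s) * Real.exp s with hρ_def
  have hρ0 : 0 ≤ ρ := mul_nonneg ha0 (Real.exp_nonneg _)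
  have hρu : ρ ≤ Real.exp (-u) := by
    have hexp : Real.exp s ≤ 1 + s + s^2/2 + 2/9 * s^3 := by
      have hb := Real.exp_bound' hs0.le hs1 (n := 3) (by norm_num)
      have hsum : (∑ i ∈ Finset.range 3, s ^ i / (Nat.factorial i : ℝ)) = 1 + s + s^2/2 := by
        simp [Finset.sum_range_succ, Nat.factorial]
      rw [hsum] at hb
      calc Real.exp s ≤ 1 + s + s^2/2 + s^3 * (3+1) / ((Nat.factorial 3 : ℝ) * 3) := hb
        _ ≤ 1 + s + s^2/2 + 2/9 * s^3 := by norm_num [Nat.factorial]; linarith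
    have h2 : ρ ≤ 1 - s^2/2 := by nlinarith
    have h3 : 1 - s^2/2 ≤ Real.exp (-u) := by
      have := Real.add_one_le_exp (-u)
      rw [hu_def] at this ⊢
      linarith
    linarith
  set r : ℝ := Real.exp (-(u/2)) with hr_def
  have hr0 : 0 < r := Real.exp_pos _
  have hr1 : r < 1 := by
    rw [hr_def, Real.exp_lt_one_iff]; linarith
  set B1 : ℝ := (((m:ℝ)+1) / (u/2)) ^ (m+1) with hB1_def
  set B2 : ℝ := ((m:ℝ) / (u/2)) ^ m with hB2_def
  have hB10 : 0 ≤ B1 := by positivity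
  have hB20 : 0 ≤ B2 := by positivity
  set C : ℝ := Real.exp 1 * s * Real.exp u * (α * B1 + (1/α) * B2) / 2 with hC_def
  have hC0 : 0 ≤ C := by positivity
  have key : ∀ k : ℕ, (((k + 1 : ℕ) : ℝ)) ^ (m+2) * q (k + 1) t ≤ C * r ^ (k+1) := by
    intro k
    set N : ℝ := ((k + 1 : ℕ) : ℝ) with hN_def
    have hN1 : (1:ℝ) ≤ N := by rw [hN_def]; exact_mod_cast Nat.one_le_iff_ne_zero.mpr (Nat.succ_ne_zero k)
    have hN0 : (0:ℝ) < N := lt_of_lt_of_le one_pos hN1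
    have hNk : N = (k:ℝ) + 1 := by rw [hN_def]; push_cast; ring
    have hfac : Real.sqrt N * (N / Real.exp 1) ^ (k+1) ≤ (((k+1).factorial : ℕ) : ℝ) := by
      rw [hN_def]; exact factorial_lower (Nat.succ_le_succ (Nat.zero_le k))
    have hfacpos : (0:ℝ) < (((k+1).factorial : ℕ) : ℝ) := by
      exact_mod_cast Nat.factorial_pos (k+1)
    have hq : q (k+1) t = (N * (1 - s)) ^ k * s * Real.exp (-(N * (1-s))) / (((k+1).factorial : ℕ) : ℝ) := by
      rw [q, ← hs_def, ← hN_def]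
      norm_num
    have hsq : Real.sqrt N * Real.sqrt N = N := Real.mul_self_sqrt hN0.le
    -- step 1
    have step1 : N ^ (m+2) * q (k+1) t ≤ Real.exp 1 * s * (Real.sqrt N * N^m) * ρ^k := by
      rw [hq, mul_div_assoc' , div_le_iff₀ hfacpos]
      have hexp_le : Real.exp (-(N*(1-s))) ≤ Real.exp ((k:ℝ)*s - k) := by
        apply Real.exp_le_exp.mpr
        rw [hNk]; nlinarith
      calc N^(m+2) * ((N*(1-s))^k * s * Real.exp (-(N*(1-s))))
          ≤ N^(m+2) * ((N*(1-s))^k * s * Real.exp ((k:ℝ)*s - k)) := by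
            apply mul_le_mul_of_nonneg_left _ (by positivity)
            apply mul_le_mul_of_nonneg_left hexp_le (by positivity)
        _ = (Real.exp 1 * s * (Real.sqrt N * N^m) * ρ^k) * (Real.sqrt N * (N/Real.exp 1)^(k+1)) := by
            rw [hρ_def, mul_pow, mul_pow, div_pow, Real.exp_sub,
              ← Real.exp_nat_mul, ← Real.exp_nat_mul]
            rw [show Real.exp (((k+1:ℕ):ℝ) * 1) = Real.exp (k:ℝ) * Real.exp 1 by
              rw [← Real.exp_add]; push_cast; ring_nf]
            set σ : ℝ := Real.sqrt N with hσ_def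
            have hσ : N = σ^2 := (Real.sq_sqrt hN0.le).symm
            rw [hσ]
            have he1 : Real.exp ((k:ℝ)) ≠ 0 := (Real.exp_pos _).ne'
            have he2 : Real.exp 1 ≠ 0 := (Real.exp_pos _).ne'
            field_simp
            ring
        _ ≤ (Real.exp 1 * s * (Real.sqrt N * N^m) * ρ^k) * (((k+1).factorial : ℕ) : ℝ) := by
            apply mul_le_mul_of_nonneg_left hfac (by positivity)
    -- step 2 : AM-GM  √N N^m ≤ (α N^{m+1} + N^m/α)/2
    have hAM : 2 * Real.sqrt N ≤ α * N + 1/α := by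
      have h1 : 0 ≤ (α * Real.sqrt N - 1)^2 := sq_nonneg _
      have h2 : α * (α * N + 1/α) - α * (2*Real.sqrt N) = (α*Real.sqrt N - 1)^2 := by
        have hNp : N = Real.sqrt N ^ 2 := (Real.sq_sqrt hN0.le).symm
        field_simp
        linear_combination (α^2) * hNp
      have h3 : α * (2*Real.sqrt N) ≤ α * (α * N + 1/α) := by linarith
      exact le_of_mul_le_mul_left h3 hα0
    have step2 : Real.sqrt N * N^m ≤ (α * N^(m+1) + (1/α) * N^m)/2 := by
      have h3 : (2*Real.sqrt N) * N^m ≤ (α*N + 1/α) * N^m :=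
        mul_le_mul_of_nonneg_right hAM (by positivity)
      have h4 : (α*N+1/α)*N^m = α*N^(m+1) + (1/α)*N^m := by ring
      nlinarith [pow_nonneg hN0.le m]
    -- step 3 : ρ^k ≤ exp u * exp (-(N*u))
    have step3 : ρ^k ≤ Real.exp u * Real.exp (-(N*u)) := by
      calc ρ^k ≤ Real.exp (-u) ^ k := pow_le_pow_left₀ hρ0 hρu k
        _ = Real.exp (-((k:ℝ)*u)) := by rw [← Real.exp_nat_mul]; ring_nf
        _ = Real.exp u * Real.exp (-(N*u)) := by
            rw [← Real.exp_add, hNk]; ring_nf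
    -- step 4 : N-power × exp decay
    have hc2 : (0:ℝ) < u/2 := by positivity
    have hL1 : N^(m+1) ≤ B1 * Real.exp (N*(u/2)) := by
      have h := pow_mul_exp_le (m+1) hc2 hN0.le
      have h2 : N^(m+1) = N^(m+1) * Real.exp (-(N*(u/2))) * Real.exp (N*(u/2)) := by
        rw [mul_assoc, ← Real.exp_add]; simp
      rw [h2]
      apply mul_le_mul_of_nonneg_right _ (Real.exp_nonneg _)
      calc N^(m+1) * Real.exp (-(N*(u/2))) ≤ (((m+1:ℕ):ℝ)/(u/2))^(m+1) := h
        _ = B1 := by rw [hB1_def]; push_cast; ring_nf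
    have hL2 : N^m ≤ B2 * Real.exp (N*(u/2)) := by
      have h := pow_mul_exp_le m hc2 hN0.le
      have h2 : N^m = N^m * Real.exp (-(N*(u/2))) * Real.exp (N*(u/2)) := by
        rw [mul_assoc, ← Real.exp_add]; simp
      rw [h2]
      apply mul_le_mul_of_nonneg_right _ (Real.exp_nonneg _)
      exact h.trans_eq (by rw [hB2_def])
    -- combine
    have hrpow : r ^ (k+1) = Real.exp (-(N*(u/2))) := by
      rw [hr_def, ← Real.exp_nat_mul, hNk]
      congr 1
      push_cast
      ring
    calc N ^ (m+2) * q (k+1) t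
        ≤ Real.exp 1 * s * (Real.sqrt N * N^m) * ρ^k := step1
      _ ≤ Real.exp 1 * s * ((α * N^(m+1) + (1/α) * N^m)/2) * ρ^k := by
          apply mul_le_mul_of_nonneg_right _ (pow_nonneg hρ0 k)
          apply mul_le_mul_of_nonneg_left step2 (by positivity)
      _ ≤ Real.exp 1 * s * ((α * N^(m+1) + (1/α) * N^m)/2) * (Real.exp u * Real.exp (-(N*u))) := by
          apply mul_le_mul_of_nonneg_left step3 (by positivity)
      _ ≤ Real.exp 1 * s * (((α * (B1 * Real.exp (N*(u/2))) + (1/α) * (B2 * Real.exp (N*(u/2)))))/2) *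
            (Real.exp u * Real.exp (-(N*u))) := by
          gcongr
      _ = C * r ^ (k+1) := by
          rw [hC_def, hrpow]
          have hEVW : Real.exp (N*(u/2)) * Real.exp (-(N*u)) = Real.exp (-(N*(u/2))) := by
            rw [← Real.exp_add]; congr 1; ring
          linear_combination (Real.exp 1 * s * Real.exp u * (α*B1 + (1/α)*B2)/2) * hEVW
  -- nonnegativity of terms
  have hnonneg : ∀ k : ℕ, 0 ≤ (((k + 1 : ℕ) : ℝ)) ^ (m+2) * q (k + 1) t := by
    intro k
    have h1 : (0:ℝ) ≤ 1 - Real.exp (-t) := by rw [← hs_def]; linarith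
    have h2 : 0 ≤ q (k+1) t := by
      rw [q]
      apply div_nonneg _ (by positivity)
      apply mul_nonneg (mul_nonneg _ (Real.exp_nonneg _)) (Real.exp_nonneg _)
      exact pow_nonneg (mul_nonneg (by positivity) h1) _
    exact mul_nonneg (by positivity) h2
  -- summability
  have hgeos : Summable (fun k : ℕ => C * r ^ (k+1)) := by
    have h := (summable_geometric_of_lt_one hr0.le hr1).mul_left (C * r)
    have h2 : (fun k : ℕ => C * r * r ^ k) = (fun k : ℕ => C * r ^ (k+1)) := by
      funext k; ring
    rwa [h2] at h
  have hsummable : Summable (fun k : ℕ => (((k + 1 : ℕ) : ℝ)) ^ (m+2) * q (k + 1) t) :=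
    Summable.of_nonneg_of_le hnonneg key hgeos
  refine ⟨hsummable, ?_⟩
  have htsum : (∑' k : ℕ, (((k + 1 : ℕ) : ℝ)) ^ (m+2) * q (k + 1) t) ≤ ∑' k : ℕ, C * r ^ (k+1) :=
    Summable.tsum_le_tsum key hsummable hgeos
  have hgeo_val : (∑' k : ℕ, C * r ^ (k+1)) = C * r * (1-r)⁻¹ := by
    calc (∑' k : ℕ, C * r ^ (k+1)) = ∑' k : ℕ, (C * r) * r ^ k := by
          congr 1; funext k; ring
      _ = (C * r) * ∑' k : ℕ, r ^ k := tsum_mul_left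
      _ = C * r * (1-r)⁻¹ := by rw [tsum_geometric_of_lt_one hr0.le hr1]
  have hinv : (1 - r)⁻¹ ≤ Real.exp (u/2) * (2/u) := by
    have hx : Real.exp (-(u/2)) * Real.exp (u/2) = 1 := by rw [← Real.exp_add]; simp
    have h1 : u/2 * Real.exp (-(u/2)) ≤ 1 - r := by
      have h := Real.add_one_le_exp (u/2)
      rw [hr_def]
      nlinarith [Real.exp_pos (-(u/2))]
    have h3 : (0:ℝ) < u/2 * Real.exp (-(u/2)) := by positivity
    calc (1-r)⁻¹ ≤ (u/2 * Real.exp (-(u/2)))⁻¹ := by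
          apply inv_anti₀ h3 h1
      _ = Real.exp (u/2) * (2/u) := by
          rw [mul_inv, Real.exp_neg, inv_inv]
          field_simp
  -- final numeric estimates
  have he8 : Real.exp 1 * Real.exp u * Real.exp (u/2) ≤ 8 := by
    have h1 : Real.exp 1 * Real.exp u * Real.exp (u/2) = Real.exp (1 + u + u/2) := by
      rw [← Real.exp_add, ← Real.exp_add]
    have h2 : Real.exp (1 + u + u/2) ≤ Real.exp 2 := Real.exp_le_exp.mpr (by linarith)
    have h3 : Real.exp 2 = Real.exp 1 * Real.exp 1 := by rw [← Real.exp_add]; norm_num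
    have h4 := Real.exp_one_lt_d9
    nlinarith [Real.exp_pos 1]
  have hupow : ∀ j : ℕ, u^j = s^(2*j)/2^j := by
    intro j; rw [hu_def, div_pow, ← pow_mul]
  have hP1 : α / u^(m+2) ≤ 2^(m+2)/s^(2*m+3) := by
    rw [div_le_div_iff₀ (by positivity) (by positivity)]
    have h1 : (2:ℝ)^(m+2) * u^(m+2) = s^(2*(m+2)) := by
      rw [hupow]; field_simp
    rw [h1]
    calc α * s^(2*m+3) ≤ s * s^(2*m+3) := mul_le_mul_of_nonneg_right hαs (by positivity)
      _ = s^(2*(m+2)) := by ring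
  have hP2 : (1/α) / u^(m+1) ≤ 2^(m+2)/s^(2*m+3) := by
    rw [div_le_div_iff₀ (by positivity) (by positivity)]
    have h1 : (2:ℝ)^(m+2) * u^(m+1) = 2 * s^(2*(m+1)) := by
      rw [hupow]; field_simp; ring
    rw [h1]
    rw [div_mul_eq_mul_div, one_mul, div_le_iff₀ hα0]
    calc s^(2*m+3) = s^(2*(m+1)) * s := by ring
      _ ≤ s^(2*(m+1)) * (2*α) := mul_le_mul_of_nonneg_left hsα (by positivity)
      _ = 2 * s^(2*(m+1)) * α := by ring
  have hQ1 : ((2:ℝ)*((m:ℝ)+1))^(m+1) ≤ (2*((m:ℝ)+2))^(m+2) := by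
    calc ((2:ℝ)*((m:ℝ)+1))^(m+1) ≤ (2*((m:ℝ)+2))^(m+1) :=
          pow_le_pow_left₀ (by positivity) (by linarith) _
      _ ≤ (2*((m:ℝ)+2))^(m+2) := pow_le_pow_right₀ (by linarith) (by omega)
  have hQ2 : ((2:ℝ)*(m:ℝ))^m ≤ (2*((m:ℝ)+2))^(m+2) := by
    calc ((2:ℝ)*(m:ℝ))^m ≤ (2*((m:ℝ)+2))^m :=
          pow_le_pow_left₀ (by positivity) (by linarith) _
      _ ≤ (2*((m:ℝ)+2))^(m+2) := pow_le_pow_right₀ (by linarith) (by omega)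
  have hB1eq : B1 = (2*((m:ℝ)+1))^(m+1) / u^(m+1) := by
    rw [hB1_def, show ((m:ℝ)+1)/(u/2) = 2*((m:ℝ)+1)/u by field_simp, div_pow]
  have hB2eq : B2 = (2*(m:ℝ))^m / u^m := by
    rw [hB2_def, show (m:ℝ)/(u/2) = 2*(m:ℝ)/u by field_simp, div_pow]
  have hbr : α*(B1/u) + (1/α)*(B2/u) ≤ 2*((2*((m:ℝ)+2))^(m+2) * (2^(m+2)/s^(2*m+3))) := by
    have e1 : α*(B1/u) = (2*((m:ℝ)+1))^(m+1) * (α/u^(m+2)) := by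
      rw [hB1eq, div_div, ← pow_succ]; ring
    have e2 : (1/α)*(B2/u) = (2*(m:ℝ))^m * ((1/α)/u^(m+1)) := by
      rw [hB2eq, div_div, ← pow_succ]; ring
    have b1 : (2*((m:ℝ)+1))^(m+1) * (α/u^(m+2)) ≤ (2*((m:ℝ)+2))^(m+2) * (2^(m+2)/s^(2*m+3)) :=
      mul_le_mul hQ1 hP1 (by positivity) (by positivity)
    have b2 : (2*(m:ℝ))^m * ((1/α)/u^(m+1)) ≤ (2*((m:ℝ)+2))^(m+2) * (2^(m+2)/s^(2*m+3)) :=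
      mul_le_mul hQ2 hP2 (by positivity) (by positivity)
    rw [e1, e2]; linarith
  have hfin : C * (Real.exp (u/2) * (2/u)) ≤ 16 * (4*((m:ℝ)+2))^(m+2) / s^(2*m+2) := by
    have hCex : C * (Real.exp (u/2) * (2/u)) =
        (Real.exp 1 * Real.exp u * Real.exp (u/2)) * (s * (α*(B1/u) + (1/α)*(B2/u))) := by
      rw [hC_def]; ring
    rw [hCex]
    have hnn : 0 ≤ s * (α*(B1/u) + (1/α)*(B2/u)) := by positivity
    calc (Real.exp 1 * Real.exp u * Real.exp (u/2)) * (s * (α*(B1/u) + (1/α)*(B2/u)))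
        ≤ 8 * (s * (α*(B1/u) + (1/α)*(B2/u))) := mul_le_mul_of_nonneg_right he8 hnn
      _ ≤ 8 * (s * (2*((2*((m:ℝ)+2))^(m+2) * (2^(m+2)/s^(2*m+3))))) := by
          apply mul_le_mul_of_nonneg_left _ (by norm_num)
          exact mul_le_mul_of_nonneg_left hbr hs0.le
      _ = 16 * (4*((m:ℝ)+2))^(m+2) / s^(2*m+2) := by
          have hXY : (2*((m:ℝ)+2))^(m+2) * 2^(m+2) = (4*((m:ℝ)+2))^(m+2) := by
            rw [← mul_pow]; congr 1; ring
          rw [← hXY]; field_simp [hs0.ne']; ring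
  have hsexp : (1:ℝ)/s^(2*m+2) = Real.exp (2*((((m+2:ℕ)):ℝ)-1)*t) := by
    rw [hs_def, ← Real.exp_nat_mul, one_div, ← Real.exp_neg]
    congr 1; push_cast; ring
  calc (∑' k : ℕ, (((k + 1 : ℕ) : ℝ)) ^ (m+2) * q (k + 1) t)
      ≤ ∑' k : ℕ, C * r ^ (k+1) := htsum
    _ = C * r * (1-r)⁻¹ := hgeo_val
    _ ≤ C * 1 * (1-r)⁻¹ := by
        apply mul_le_mul_of_nonneg_right _ (inv_nonneg.mpr (by linarith))
        exact mul_le_mul_of_nonneg_left hr1.le hC0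
    _ = C * (1-r)⁻¹ := by ring
    _ ≤ C * (Real.exp (u/2) * (2/u)) := mul_le_mul_of_nonneg_left hinv hC0
    _ ≤ 16 * (4*((m:ℝ)+2))^(m+2) / s^(2*m+2) := hfin
    _ = 16 * (4*((m:ℝ)+2))^(m+2) * Real.exp (2*((((m+2:ℕ)):ℝ)-1)*t) := by
        rw [div_eq_mul_one_div, hsexp]


end Parking
end
end

section
/- Fix an integer k ≥ 2 and a real α ∈ (0,1). Then lim_{n→∞} binom(⌊αn⌋, k−2) · k^{k−2} · (n−k)^{⌊αn⌋−k} · (n−⌊αn⌋−1) · n / n^{⌊αn⌋} = (1−α) · α^{k−2} · (k^{k−2}/(k−2)!) · e^{−αk}. (The left-hand side is the probability that, after the ⌊αn⌋-th arrival in a circular parking of n−1 cars on n places, the first car to have parked belongs to a block of size k.) -/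
open scoped BigOperators
open Classical Filter Topology

noncomputable section

namespace Parking

/-- for fixed `k ≥ 2` and `α ∈ (0,1)`,
`binom(⌊αn⌋, k-2) · k^{k-2} · (n-k)^{⌊αn⌋-k} · (n-⌊αn⌋-1) · n / n^{⌊αn⌋}
  → (1-α) α^{k-2} (k^{k-2}/(k-2)!) e^{-αk}`. -/
theorem tagged_cluster_limit (k : ℕ) (hk : 2 ≤ k) (α : ℝ) (hα : α ∈ Set.Ioo (0 : ℝ) 1) :
    Tendsto (fun n : ℕ =>
        ((((⌊α * n⌋₊).choose (k - 2) * k ^ (k - 2) * (n - k) ^ (⌊α * n⌋₊ - k)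
            * (n - ⌊α * n⌋₊ - 1) * n : ℕ)) : ℝ) / (n : ℝ) ^ ⌊α * n⌋₊)
      atTop
      (𝓝 ((1 - α) * α ^ (k - 2) * ((k : ℝ) ^ (k - 2) / (Nat.factorial (k - 2)))
        * Real.exp (-(α * k)))) := by
  obtain ⟨hα0, hα1⟩ := hα
  set r := k - 2 with hr
  have hm_div : Tendsto (fun n : ℕ => ((⌊α * n⌋₊ : ℕ) : ℝ) / n) atTop (𝓝 α) :=
    (tendsto_nat_floor_mul_div_atTop hα0.le).comp tendsto_natCast_atTop_atTop
  have hn_inv : Tendsto (fun n : ℕ => ((n : ℝ))⁻¹) atTop (𝓝 0) :=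
    tendsto_inv_atTop_zero.comp tendsto_natCast_atTop_atTop
  have hm_top : Tendsto (fun n : ℕ => ⌊α * n⌋₊) atTop atTop :=
    tendsto_nat_floor_atTop.comp (Tendsto.const_mul_atTop hα0 tendsto_natCast_atTop_atTop)
  -- eventually m < n
  have hm_lt : ∀ᶠ n : ℕ in atTop, ⌊α * n⌋₊ + 1 ≤ n := by
    filter_upwards [eventually_gt_atTop 0] with n hn0
    have h1 : (⌊α * n⌋₊ : ℝ) ≤ α * n := Nat.floor_le (by positivity)
    have h2 : α * n < n := by
      have : (0:ℝ) < n := by exact_mod_cast hn0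
      nlinarith
    have : (⌊α * n⌋₊ : ℝ) < (n : ℝ) := lt_of_le_of_lt h1 h2
    exact_mod_cast Nat.succ_le_of_lt (by exact_mod_cast this)
  have hdiff : ∀ j : ℕ, Tendsto (fun n : ℕ => ((⌊α * n⌋₊ - j : ℕ) : ℝ) / n) atTop (𝓝 α) := by
    intro j
    have h1 : Tendsto (fun n : ℕ => ((⌊α * n⌋₊ : ℕ) : ℝ) / n - (j : ℝ) * ((n:ℝ))⁻¹)
        atTop (𝓝 (α - (j:ℝ) * 0)) := hm_div.sub (hn_inv.const_mul _)
    rw [mul_zero, sub_zero] at h1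
    refine h1.congr' ?_
    filter_upwards [hm_top.eventually_ge_atTop j, eventually_gt_atTop 0] with n hn hn0
    have hne : (n:ℝ) ≠ 0 := by positivity
    rw [Nat.cast_sub hn]
    field_simp
  -- T1 : choose limit
  have hprod : Tendsto (fun n : ℕ => ∏ i ∈ Finset.range r, (((⌊α * n⌋₊ - i : ℕ) : ℝ) / n))
      atTop (𝓝 (α ^ r)) := by
    have := tendsto_finset_prod (Finset.range r) (fun i _ => hdiff i)
    simpa using this
  have T1 : Tendsto (fun n : ℕ => (((⌊α * n⌋₊).choose r : ℕ) : ℝ) / (n : ℝ) ^ r)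
      atTop (𝓝 (α ^ r / (Nat.factorial r : ℝ))) := by
    have h := hprod.div_const (Nat.factorial r : ℝ)
    refine h.congr' ?_
    filter_upwards [eventually_gt_atTop 0] with n hn0
    have hne : (n:ℝ) ≠ 0 := by positivity
    have hfac : (Nat.factorial r : ℝ) ≠ 0 := by positivity
    have h1 : ((⌊α * n⌋₊.descFactorial r : ℕ) : ℝ)
        = (Nat.factorial r : ℝ) * ((⌊α * n⌋₊).choose r : ℝ) := by
      exact_mod_cast congrArg (Nat.cast (R := ℝ))
        (Nat.descFactorial_eq_factorial_mul_choose (⌊α * n⌋₊) r)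
    have h2 : ∏ i ∈ Finset.range r, (((⌊α * n⌋₊ - i : ℕ) : ℝ) / n)
        = ((⌊α * n⌋₊.descFactorial r : ℕ) : ℝ) / (n:ℝ) ^ r := by
      rw [Nat.descFactorial_eq_prod_range, Nat.cast_prod, Finset.prod_div_distrib,
        Finset.prod_const, Finset.card_range]
    rw [h2, h1]
    field_simp
  -- T2 : exponential limit
  have hlog : Tendsto (fun n : ℕ => (((⌊α * n⌋₊ - k : ℕ) : ℝ) / n)
      * ((n : ℝ) * Real.log (1 + (-(k:ℝ)) / n))) atTop (𝓝 (α * (-(k:ℝ)))) :=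
    (hdiff k).mul ((Real.tendsto_mul_log_one_add_div_atTop (-(k:ℝ))).comp
      tendsto_natCast_atTop_atTop)
  have hlim_eq : α * (-(k:ℝ)) = -(α * k) := by ring
  rw [hlim_eq] at hlog
  have T2 : Tendsto (fun n : ℕ => (((n : ℝ) - k) / n) ^ (⌊α * n⌋₊ - k)) atTop
      (𝓝 (Real.exp (-(α * k)))) := by
    have hexp := (Real.continuous_exp.tendsto _).comp hlog
    refine hexp.congr' ?_
    filter_upwards [eventually_gt_atTop k, eventually_gt_atTop 0] with n hnk hn0
    have hne : (n:ℝ) ≠ 0 := by positivity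
    have hb : (0:ℝ) < ((n:ℝ) - k) / n := by
      have : (k:ℝ) < n := by exact_mod_cast hnk
      have : (0:ℝ) < (n:ℝ) - k := by linarith
      positivity
    have h1 : 1 + (-(k:ℝ)) / n = ((n:ℝ) - k) / n := by field_simp; ring
    have h2 : ((⌊α * n⌋₊ - k : ℕ) : ℝ) / n * ((n:ℝ) * Real.log (((n:ℝ) - k) / n))
        = ((⌊α * n⌋₊ - k : ℕ) : ℝ) * Real.log (((n:ℝ) - k) / n) := by
      field_simp
    simp only [Function.comp_apply, h1, h2]
    rw [Real.exp_nat_mul, Real.exp_log hb]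
  -- T3 : last factor
  have T3 : Tendsto (fun n : ℕ => ((n - ⌊α * n⌋₊ - 1 : ℕ) : ℝ) / n) atTop (𝓝 (1 - α)) := by
    have h1 : Tendsto (fun n : ℕ => 1 - ((⌊α * n⌋₊ : ℕ) : ℝ) / n - ((n:ℝ))⁻¹)
        atTop (𝓝 (1 - α - 0)) := (tendsto_const_nhds.sub hm_div).sub hn_inv
    rw [sub_zero] at h1
    refine h1.congr' ?_
    filter_upwards [hm_lt, eventually_gt_atTop 0] with n hn hn0
    have hne : (n:ℝ) ≠ 0 := by positivity
    have hmn : ⌊α * n⌋₊ ≤ n := by omega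
    have h1n : 1 ≤ n - ⌊α * n⌋₊ := by omega
    rw [Nat.cast_sub h1n, Nat.cast_sub hmn]
    field_simp
    push_cast; ring
  -- combine
  have Tfinal := ((T1.mul_const ((k:ℝ) ^ r)).mul T2).mul T3
  have hval : α ^ r / (Nat.factorial r : ℝ) * (k:ℝ) ^ r * Real.exp (-(α * k)) * (1 - α)
      = (1 - α) * α ^ r * ((k : ℝ) ^ r / (Nat.factorial r : ℝ)) * Real.exp (-(α * k)) := by
    ring
  rw [hval] at Tfinal
  refine Tfinal.congr' ?_
  filter_upwards [hm_lt, hm_top.eventually_ge_atTop k, eventually_ge_atTop k,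
    eventually_gt_atTop 0] with n hmn hmk hnk hn0
  have hne : (n:ℝ) ≠ 0 := by positivity
  set m := ⌊α * n⌋₊ with hm
  have hmn' : m ≤ n := by omega
  have h1n : 1 ≤ n - m := by omega
  have hpow : (n:ℝ) ^ m = (n:ℝ) ^ r * (n:ℝ) ^ (m - k) * n * n := by
    rw [← pow_add, ← pow_succ, ← pow_succ]
    congr 1
    omega
  push_cast [Nat.cast_sub hnk, Nat.cast_sub h1n, Nat.cast_sub hmn']
  rw [hpow, div_pow]
  field_simp


end Parking
end
end
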